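/- arXiv:1310.4048 — 10 statements merged into one kernel-verified Lean document; each statement's English description precedes it below -/
import Mathlib

section
/- Let P be a contraction on a Hilbert space H and suppose ρ(αS, α²P) ≥ 0 for all α in the closed unit disc, where ρ(S,P) = 2(I - P*P) - (S - S*P) - (S* - P*S). If F is an operator on 𝒟_P satisfying S - S*P = D_P F D_P, then the numerical radius of F is at most 1. -/
open scoped InnerProductSpace
open ContinuousLinearMap

theorem fundamental_operator_numRadius_le_one
    {H : Type*} [NormedAddCommGroup H] [InnerProductSpace ℂ H] [CompleteSpace H]
    (S P DP F : H →L[ℂ] H)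
    (hcomm : S ∘L P = P ∘L S) (hP : ‖P‖ ≤ 1)
    (hDPpos : DP.IsPositive)
    (hDP : DP ∘L DP = 1 - adjoint P ∘L P)
    (hρ : ∀ α : ℂ, ‖α‖ ≤ 1 →
      ((2 : ℂ) • (1 - adjoint (α ^ 2 • P) ∘L (α ^ 2 • P))
        - ((α • S) - adjoint (α • S) ∘L (α ^ 2 • P))
        - (adjoint (α • S) - adjoint (α ^ 2 • P) ∘L (α • S))).IsPositive)
    (hF : S - adjoint S ∘L P = DP ∘L F ∘L DP) :
    ∀ x ∈ closure (Set.range DP), ‖x‖ ≤ 1 → ‖(⟪F x, x⟫_ℂ : ℂ)‖ ≤ 1 := by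
  have hsym := hDPpos.1
  have key : ∀ y : H, ‖(⟪F (DP y), DP y⟫_ℂ : ℂ)‖ ≤ ‖DP y‖^2 := by
    intro y
    set t : ℂ := ⟪F (DP y), DP y⟫_ℂ with ht
    by_cases h0 : t = 0
    · rw [h0]; simp only [norm_zero]; positivity
    · set α : ℂ := t / ‖t‖ with hαdef
      have hαn : ‖α‖ = 1 := by
        rw [hαdef, norm_div, Complex.norm_real, norm_norm]
        exact div_self (norm_ne_zero_iff.mpr h0)
      have hα0 : α ≠ 0 := by
        intro h; rw [h] at hαn; simp at hαn
      have hc' : (starRingEnd ℂ) α * α = 1 := by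
        rw [mul_comm, Complex.mul_conj, Complex.normSq_eq_norm_sq, hαn]
        norm_num
      have hc : (starRingEnd ℂ) α = α⁻¹ := eq_inv_of_mul_eq_one_left hc'

      have hpos := (hρ α hαn.le).2 y
      rw [reApplyInnerSelf] at hpos
      -- compute the inner product
      have hT : ∀ z : H, (S - adjoint S ∘L P) z = DP (F (DP z)) := by
        intro z; rw [hF]; simp
      have hTy : ⟪S y, y⟫_ℂ - ⟪P y, S y⟫_ℂ = t := by
        have := hT y
        simp only [sub_apply, comp_apply] at this
        have h2 : ⟪S y - adjoint S (P y), y⟫_ℂ = ⟪DP (F (DP y)), y⟫_ℂ := by rw [this]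
        rw [inner_sub_left, adjoint_inner_left] at h2
        rw [h2]
        rw [show (⟪DP (F (DP y)), y⟫_ℂ) = ⟪F (DP y), DP y⟫_ℂ from hsym _ _, ht]
      have hDPy : ⟪y, y⟫_ℂ - ⟪P y, P y⟫_ℂ = (‖DP y‖^2 : ℝ) := by
        have : (1 - adjoint P ∘L P) y = DP (DP y) := by rw [← hDP]; simp
        have h2 : ⟪y - adjoint P (P y), y⟫_ℂ = ⟪DP (DP y), y⟫_ℂ := by
          simpa [sub_apply, comp_apply] using congrArg (⟪·, y⟫_ℂ) this
        rw [inner_sub_left, adjoint_inner_left] at h2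
        rw [h2, show (⟪DP (DP y), y⟫_ℂ) = ⟪DP y, DP y⟫_ℂ from hsym _ _,
          inner_self_eq_norm_sq_to_K]
        norm_cast
      have hadj : ∀ (c : ℂ) (A : H →L[ℂ] H), adjoint (c • A) = (starRingEnd ℂ c) • adjoint A := by
        intro c A
        simp [← star_eq_adjoint, star_smul]
      have hinner : ⟪((2 : ℂ) • (1 - adjoint (α ^ 2 • P) ∘L (α ^ 2 • P))
        - ((α • S) - adjoint (α • S) ∘L (α ^ 2 • P))
        - (adjoint (α • S) - adjoint (α ^ 2 • P) ∘L (α • S))) y, y⟫_ℂ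
          = 2 * (‖DP y‖^2 : ℝ) - α⁻¹ * t - α * (starRingEnd ℂ) t := by
        simp only [sub_apply, smul_apply, comp_apply, one_apply, hadj, hc]
        simp only [inner_sub_left, inner_smul_left, adjoint_inner_left, hc,
          map_inv₀, map_pow, inner_smul_right_eq_smul]
        have htc := congrArg (starRingEnd ℂ) hTy
        simp only [map_sub, inner_conj_symm] at htc
        rw [inv_inv, ← htc, ← hTy, ← hDPy, Complex.conj_ofNat]
        field_simp
        rw [show (1 : H →L[ℂ] H) y = y from rfl]
      rw [hinner] at hpos
      have htn : ((‖t‖ : ℝ) : ℂ) ≠ 0 := by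
        exact_mod_cast norm_ne_zero_iff.mpr h0
      have h1 : α⁻¹ * t = ((‖t‖ : ℝ) : ℂ) := by
        rw [hαdef]; field_simp
      have hmc : t * (starRingEnd ℂ) t = ((‖t‖ : ℝ) : ℂ) ^ 2 := by
        rw [Complex.mul_conj, Complex.normSq_eq_norm_sq]
        norm_cast
      have h2 : α * (starRingEnd ℂ) t = ((‖t‖ : ℝ) : ℂ) := by
        rw [hαdef, div_mul_eq_mul_div, hmc, sq, mul_div_assoc, div_self htn, mul_one]
      rw [h1, h2] at hpos
      have hcast : ((2 * ‖DP y‖ ^ 2 - ‖t‖ - ‖t‖ : ℝ) : ℂ)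
          = 2 * ((‖DP y‖ ^ 2 : ℝ) : ℂ) - ((‖t‖ : ℝ) : ℂ) - ((‖t‖ : ℝ) : ℂ) := by
        push_cast; ring
      rw [← hcast] at hpos
      simp only [RCLike.re_to_complex, Complex.ofReal_re] at hpos
      linarith
  intro x hx hx1
  have hsub : closure (Set.range DP) ⊆ {z : H | ‖(⟪F z, z⟫_ℂ : ℂ)‖ ≤ ‖z‖ ^ 2} := by
    apply closure_minimal
    · rintro z ⟨y, rfl⟩; exact key y
    · exact isClosed_le ((F.continuous.inner continuous_id).norm) (continuous_norm.pow 2)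
  have h := hsub hx
  refine le_trans h ?_
  nlinarith [norm_nonneg x]
end

section
/- Let A be a bounded operator on a Hilbert space E with numerical radius ω(A) ≤ 1. Then for every z in the closed unit disc, ‖A* + Az‖ ≤ 2. -/
open scoped InnerProductSpace

/-- The numerical radius of a bounded operator. -/
noncomputable def numRadius {E : Type*} [NormedAddCommGroup E] [InnerProductSpace ℂ E]
    (T : E →L[ℂ] E) : ℝ :=
  sSup {r : ℝ | ∃ x : E, ‖x‖ ≤ 1 ∧ r = ‖(⟪T x, x⟫_ℂ : ℂ)‖}

/-- Norm bound for a symmetric operator from a bound on its quadratic form. -/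
lemma symm_norm_le {E : Type*} [NormedAddCommGroup E] [InnerProductSpace ℂ E]
    {B : E →L[ℂ] E} {C : ℝ} (hC : 0 ≤ C)
    (hsym : ∀ x y : E, ⟪B x, y⟫_ℂ = ⟪x, B y⟫_ℂ)
    (h : ∀ x : E, ‖(⟪B x, x⟫_ℂ : ℂ)‖ ≤ C * ‖x‖ ^ 2) : ‖B‖ ≤ C := by
  refine B.opNorm_le_bound hC fun x => ?_
  rcases eq_or_ne (B x) 0 with h0 | h0
  · simp [h0, mul_nonneg hC (norm_nonneg x)]
  have hx : x ≠ 0 := fun h' => h0 (by simp [h'])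
  have hxpos : 0 < ‖x‖ := norm_pos_iff.mpr hx
  have hBxpos : 0 < ‖B x‖ := norm_pos_iff.mpr h0
  set y : E := ((‖x‖ / ‖B x‖ : ℝ) : ℂ) • B x with hy
  have hny : ‖y‖ = ‖x‖ := by
    rw [hy, norm_smul, Complex.norm_real, Real.norm_eq_abs,
      abs_of_nonneg (div_nonneg (norm_nonneg x) (norm_nonneg (B x)))]
    field_simp
  have hBxy : ⟪B x, y⟫_ℂ = ((‖x‖ * ‖B x‖ : ℝ) : ℂ) := by
    rw [hy, inner_smul_right, inner_self_eq_norm_sq_to_K]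
    have hne : ((‖B x‖ : ℝ) : ℂ) ≠ 0 := by exact_mod_cast hBxpos.ne'
    push_cast
    field_simp
    rfl
  have hByx : ⟪B y, x⟫_ℂ = ((‖x‖ * ‖B x‖ : ℝ) : ℂ) := by
    rw [hsym y x, ← inner_conj_symm, hBxy, Complex.conj_ofReal]
  have hident : ⟪B (x + y), x + y⟫_ℂ - ⟪B (x - y), x - y⟫_ℂ
      = 2 * ⟪B x, y⟫_ℂ + 2 * ⟪B y, x⟫_ℂ := by
    simp only [map_add, map_sub, inner_add_left, inner_add_right, inner_sub_left,
      inner_sub_right]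
    ring
  have hpar : ‖x + y‖ ^ 2 + ‖x - y‖ ^ 2 = 2 * (‖x‖ ^ 2 + ‖y‖ ^ 2) := by
    have := parallelogram_law_with_norm ℂ x y
    nlinarith [this]
  have hmain : 4 * (‖x‖ * ‖B x‖) ≤ 4 * (C * ‖x‖ ^ 2) := by
    have h1 : (4 : ℝ) * (‖x‖ * ‖B x‖)
        = ‖(2 * ⟪B x, y⟫_ℂ + 2 * ⟪B y, x⟫_ℂ : ℂ)‖ := by
      rw [hBxy, hByx]
      have : (2 * ((‖x‖ * ‖B x‖ : ℝ) : ℂ) + 2 * ((‖x‖ * ‖B x‖ : ℝ) : ℂ))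
          = ((4 * (‖x‖ * ‖B x‖) : ℝ) : ℂ) := by push_cast; ring
      rw [this, Complex.norm_real, Real.norm_eq_abs, abs_of_nonneg (by positivity)]
    calc 4 * (‖x‖ * ‖B x‖)
        = ‖(⟪B (x + y), x + y⟫_ℂ - ⟪B (x - y), x - y⟫_ℂ : ℂ)‖ := by rw [hident, ← h1]
      _ ≤ ‖(⟪B (x + y), x + y⟫_ℂ : ℂ)‖ + ‖(⟪B (x - y), x - y⟫_ℂ : ℂ)‖ := norm_sub_le _ _
      _ ≤ C * ‖x + y‖ ^ 2 + C * ‖x - y‖ ^ 2 := add_le_add (h _) (h _)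
      _ = C * (‖x + y‖ ^ 2 + ‖x - y‖ ^ 2) := by ring
      _ = C * (2 * (‖x‖ ^ 2 + ‖y‖ ^ 2)) := by rw [hpar]
      _ = 4 * (C * ‖x‖ ^ 2) := by rw [hny]; ring
  nlinarith [hmain, hxpos]

/-- Quadratic form bound from the numerical radius bound. -/
lemma inner_apply_le {E : Type*} [NormedAddCommGroup E] [InnerProductSpace ℂ E]
    (A : E →L[ℂ] E) (hA : numRadius A ≤ 1) (x : E) :
    ‖(⟪A x, x⟫_ℂ : ℂ)‖ ≤ ‖x‖ ^ 2 := by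
  rcases eq_or_ne x 0 with rfl | hx
  · simp
  have hxpos : 0 < ‖x‖ := norm_pos_iff.mpr hx
  set u : E := ((‖x‖⁻¹ : ℝ) : ℂ) • x with hu
  have hnu : ‖u‖ = 1 := by
    rw [hu, norm_smul, Complex.norm_real, Real.norm_eq_abs, abs_of_nonneg (by positivity)]
    field_simp
  have hbdd : BddAbove {r : ℝ | ∃ x : E, ‖x‖ ≤ 1 ∧ r = ‖(⟪A x, x⟫_ℂ : ℂ)‖} := by
    refine ⟨‖A‖, fun r hr => ?_⟩
    obtain ⟨v, hv, rfl⟩ := hr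
    calc ‖(⟪A v, v⟫_ℂ : ℂ)‖ ≤ ‖A v‖ * ‖v‖ := norm_inner_le_norm _ _
      _ ≤ ‖A‖ * ‖v‖ * ‖v‖ := by
          exact mul_le_mul_of_nonneg_right (A.le_opNorm v) (norm_nonneg v)
      _ ≤ ‖A‖ * 1 * 1 := by
          have := norm_nonneg (A : E →L[ℂ] E)
          gcongr
      _ = ‖A‖ := by ring
  have hmem : ‖(⟪A u, u⟫_ℂ : ℂ)‖ ∈ {r : ℝ | ∃ x : E, ‖x‖ ≤ 1 ∧ r = ‖(⟪A x, x⟫_ℂ : ℂ)‖} :=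
    ⟨u, le_of_eq hnu, rfl⟩
  have hle : ‖(⟪A u, u⟫_ℂ : ℂ)‖ ≤ 1 := le_trans (le_csSup hbdd hmem) hA
  have hxu : x = ((‖x‖ : ℝ) : ℂ) • u := by
    rw [hu, smul_smul]
    have : ((‖x‖ : ℝ) : ℂ) * ((‖x‖⁻¹ : ℝ) : ℂ) = 1 := by
      push_cast
      rw [mul_inv_cancel₀]
      exact_mod_cast hxpos.ne'
    rw [this, one_smul]
  have : (⟪A x, x⟫_ℂ : ℂ) = ((‖x‖ ^ 2 : ℝ) : ℂ) * ⟪A u, u⟫_ℂ := by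
    conv_lhs => rw [hxu]
    rw [map_smul, inner_smul_left, inner_smul_right]
    push_cast
    rw [Complex.conj_ofReal]
    ring
  rw [this, norm_mul, Complex.norm_real, Real.norm_eq_abs, abs_of_nonneg (by positivity)]
  nlinarith [hle, sq_nonneg ‖x‖]

/-- Boundary case: for unimodular `w`, `‖A† + w² A‖ ≤ 2`. -/
lemma boundary_case {E : Type*} [NormedAddCommGroup E] [InnerProductSpace ℂ E]
    [CompleteSpace E] (A : E →L[ℂ] E) (hA : numRadius A ≤ 1) (w : ℂ) (hw : ‖w‖ = 1) :
    ‖ContinuousLinearMap.adjoint A + (w ^ 2) • A‖ ≤ 2 := by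
  set B : E →L[ℂ] E := (starRingEnd ℂ w) • ContinuousLinearMap.adjoint A + w • A with hB
  have hsym : ∀ x y : E, ⟪B x, y⟫_ℂ = ⟪x, B y⟫_ℂ := by
    intro x y
    simp only [hB, ContinuousLinearMap.add_apply, ContinuousLinearMap.smul_apply,
      inner_add_left, inner_add_right, inner_smul_left, inner_smul_right,
      ContinuousLinearMap.adjoint_inner_left, ContinuousLinearMap.adjoint_inner_right,
      RingHom.id_apply, starRingEnd_self_apply]
    ring
  have hquad : ∀ x : E, ‖(⟪B x, x⟫_ℂ : ℂ)‖ ≤ 2 * ‖x‖ ^ 2 := by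
    intro x
    have hBx : (⟪B x, x⟫_ℂ : ℂ)
        = (starRingEnd ℂ) ((starRingEnd ℂ) w * ⟪A x, x⟫_ℂ)
          + (starRingEnd ℂ) w * ⟪A x, x⟫_ℂ := by
      simp only [hB, ContinuousLinearMap.add_apply, ContinuousLinearMap.smul_apply,
        inner_add_left, inner_smul_left, ContinuousLinearMap.adjoint_inner_left,
        ← inner_conj_symm x (A x), map_mul, Complex.conj_conj]
    rw [hBx]
    calc ‖(starRingEnd ℂ) ((starRingEnd ℂ) w * ⟪A x, x⟫_ℂ) + (starRingEnd ℂ) w * ⟪A x, x⟫_ℂ‖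
        ≤ ‖(starRingEnd ℂ) ((starRingEnd ℂ) w * ⟪A x, x⟫_ℂ)‖
          + ‖(starRingEnd ℂ) w * ⟪A x, x⟫_ℂ‖ := norm_add_le _ _
      _ = 2 * ‖(⟪A x, x⟫_ℂ : ℂ)‖ := by
          rw [RCLike.norm_conj, norm_mul, RCLike.norm_conj, hw]; ring
      _ ≤ 2 * ‖x‖ ^ 2 := by
          have := inner_apply_le A hA x
          linarith
  have hBnorm : ‖B‖ ≤ 2 := symm_norm_le (by norm_num) hsym hquad
  have hrw : ContinuousLinearMap.adjoint A + (w ^ 2) • A = w • B := by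
    rw [hB, smul_add, smul_smul, smul_smul]
    have h1 : w * (starRingEnd ℂ) w = 1 := by
      rw [Complex.mul_conj]
      have : Complex.normSq w = 1 := by
        rw [Complex.normSq_eq_norm_sq, hw]; norm_num
      rw [this, Complex.ofReal_one]
    rw [h1, one_smul, sq]
  rw [hrw]
  calc ‖w • B‖ = ‖w‖ * ‖B‖ := norm_smul w B
    _ ≤ 1 * 2 := by rw [hw]; exact mul_le_mul_of_nonneg_left hBnorm (by norm_num)
    _ = 2 := by ring

theorem norm_adjoint_add_smul_le_two
    {E : Type*} [NormedAddCommGroup E] [InnerProductSpace ℂ E] [CompleteSpace E]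
    (A : E →L[ℂ] E) (hA : numRadius A ≤ 1) :
    ∀ z : ℂ, ‖z‖ ≤ 1 → ‖ContinuousLinearMap.adjoint A + z • A‖ ≤ 2 := by
  have hcirc : ∀ u : ℂ, ‖u‖ = 1 → ‖ContinuousLinearMap.adjoint A + u • A‖ ≤ 2 := by
    intro u hu
    set w : ℂ := Complex.exp ((Complex.arg u / 2 : ℝ) * Complex.I) with hwdef
    have hw : ‖w‖ = 1 := by
      rw [hwdef, Complex.norm_exp_ofReal_mul_I]
    have hw2 : w ^ 2 = u := by
      rw [sq, hwdef, ← Complex.exp_add]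
      have harg : ((Complex.arg u / 2 : ℝ) : ℂ) * Complex.I
          + ((Complex.arg u / 2 : ℝ) : ℂ) * Complex.I
          = ((Complex.arg u : ℝ) : ℂ) * Complex.I := by
        push_cast; ring
      rw [harg]
      have := Complex.norm_mul_exp_arg_mul_I u
      rw [hu] at this
      simpa using this
    rw [← hw2]
    exact boundary_case A hA w hw
  intro z hz
  -- find `v` with `‖z + v‖ = 1` and `‖z - v‖ = 1`
  obtain ⟨v, hv1, hv2⟩ : ∃ v : ℂ, ‖z + v‖ = 1 ∧ ‖z - v‖ = 1 := by
    by_cases hz0 : z = 0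
    · exact ⟨1, by simp [hz0], by simp [hz0]⟩
    · set t : ℝ := ‖z‖ with ht
      have htpos : 0 < t := norm_pos_iff.mpr hz0
      set s : ℝ := Real.sqrt (1 - t ^ 2) with hs
      have hs2 : s ^ 2 = 1 - t ^ 2 := Real.sq_sqrt (by nlinarith [norm_nonneg z])
      refine ⟨((s / t : ℝ) : ℂ) * Complex.I * z, ?_, ?_⟩
      · have : z + ((s / t : ℝ) : ℂ) * Complex.I * z
            = (1 + ((s / t : ℝ) : ℂ) * Complex.I) * z := by ring
        rw [this, norm_mul]
        have hn : ‖(1 + ((s / t : ℝ) : ℂ) * Complex.I)‖ ^ 2 = 1 + (s / t) ^ 2 := by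
          rw [Complex.sq_norm, Complex.normSq_apply]
          simp
          ring
        have h2 : (‖(1 + ((s / t : ℝ) : ℂ) * Complex.I)‖ * ‖z‖) ^ 2 = 1 := by
          rw [mul_pow, hn, ← ht]
          field_simp
          nlinarith [hs2]
        have hnn : 0 ≤ ‖(1 + ((s / t : ℝ) : ℂ) * Complex.I)‖ * ‖z‖ := by positivity
        nlinarith [h2, hnn]
      · have : z - ((s / t : ℝ) : ℂ) * Complex.I * z
            = (1 - ((s / t : ℝ) : ℂ) * Complex.I) * z := by ring
        rw [this, norm_mul]
        have hn : ‖(1 - ((s / t : ℝ) : ℂ) * Complex.I)‖ ^ 2 = 1 + (s / t) ^ 2 := by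
          rw [Complex.sq_norm, Complex.normSq_apply]
          simp
          ring
        have h2 : (‖(1 - ((s / t : ℝ) : ℂ) * Complex.I)‖ * ‖z‖) ^ 2 = 1 := by
          rw [mul_pow, hn, ← ht]
          field_simp
          nlinarith [hs2]
        have hnn : 0 ≤ ‖(1 - ((s / t : ℝ) : ℂ) * Complex.I)‖ * ‖z‖ := by positivity
        nlinarith [h2, hnn]
  have key : ContinuousLinearMap.adjoint A + z • A
      = (1 / 2 : ℂ) • (ContinuousLinearMap.adjoint A + (z + v) • A)
        + (1 / 2 : ℂ) • (ContinuousLinearMap.adjoint A + (z - v) • A) := by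
    module
  rw [key]
  calc ‖(1 / 2 : ℂ) • (ContinuousLinearMap.adjoint A + (z + v) • A)
        + (1 / 2 : ℂ) • (ContinuousLinearMap.adjoint A + (z - v) • A)‖
      ≤ ‖(1 / 2 : ℂ) • (ContinuousLinearMap.adjoint A + (z + v) • A)‖
        + ‖(1 / 2 : ℂ) • (ContinuousLinearMap.adjoint A + (z - v) • A)‖ := norm_add_le _ _
    _ = (1 / 2) * ‖ContinuousLinearMap.adjoint A + (z + v) • A‖
        + (1 / 2) * ‖ContinuousLinearMap.adjoint A + (z - v) • A‖ := by
        rw [norm_smul, norm_smul]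
        norm_num
    _ ≤ (1 / 2) * 2 + (1 / 2) * 2 := by
        have h1 := hcirc (z + v) hv1
        have h2 := hcirc (z - v) hv2
        gcongr
    _ = 2 := by norm_num
end

section
/- Let T₁ be a contraction on a Hilbert space H₁, T₂ a contraction on H₂, and X : H₂ → H₁ a bounded operator. If there exists a contraction C : H₂ → H₁ such that X = (I - T₁T₁*)^{1/2} C (I - T₂*T₂)^{1/2}, then the block operator matrix [[T₁, X],[0, T₂]] on H₁ ⊕ H₂ is a contraction. -/
open ContinuousLinearMap
open scoped InnerProductSpace

-- identity: ‖T* v‖² + ‖D v‖² = ‖v‖² when D² = 1 - T T*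
lemma aux_id₁ {H : Type*} [NormedAddCommGroup H] [InnerProductSpace ℂ H] [CompleteSpace H]
    (T D : H →L[ℂ] H) (hDsa : IsSelfAdjoint D) (hD : D ∘L D = 1 - T ∘L adjoint T) (v : H) :
    ‖adjoint T v‖ ^ 2 + ‖D v‖ ^ 2 = ‖v‖ ^ 2 := by
  have h1 : (⟪D v, D v⟫_ℂ : ℂ) = ⟪(D ∘L D) v, v⟫_ℂ := by
    have h := adjoint_inner_right D (D v) v
    rw [hDsa.adjoint_eq] at h
    rw [comp_apply, ← h]
  have h2 : (⟪adjoint T v, adjoint T v⟫_ℂ : ℂ) = ⟪(T ∘L adjoint T) v, v⟫_ℂ := by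
    rw [comp_apply, ← adjoint_inner_right T (adjoint T v) v]
  have := congrArg (fun A : H →L[ℂ] H => RCLike.re (⟪A v, v⟫_ℂ)) hD
  simp only [sub_apply, ContinuousLinearMap.one_apply, inner_sub_left, map_sub] at this
  have hv : RCLike.re (⟪v, v⟫_ℂ) = ‖v‖ ^ 2 := inner_self_eq_norm_sq v
  have hDv : RCLike.re (⟪(D ∘L D) v, v⟫_ℂ) = ‖D v‖ ^ 2 := by
    rw [← h1]; exact inner_self_eq_norm_sq _
  have hTv : RCLike.re (⟪(T ∘L adjoint T) v, v⟫_ℂ) = ‖adjoint T v‖ ^ 2 := by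
    rw [← h2]; exact inner_self_eq_norm_sq _
  rw [hDv] at this
  rw [hv, hTv] at this
  linarith

lemma aux_row {H : Type*} [NormedAddCommGroup H] [InnerProductSpace ℂ H] [CompleteSpace H]
    (T D : H →L[ℂ] H) (hDsa : IsSelfAdjoint D) (hD : D ∘L D = 1 - T ∘L adjoint T)
    (x w : H) : ‖T x + D w‖ ^ 2 ≤ ‖x‖ ^ 2 + ‖w‖ ^ 2 := by
  set v := T x + D w with hv
  have key : ‖v‖ ^ 2 ≤ ‖x‖ * ‖adjoint T v‖ + ‖w‖ * ‖D v‖ := by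
    have : (‖v‖ : ℝ) ^ 2 = RCLike.re (⟪v, v⟫_ℂ) := (inner_self_eq_norm_sq v).symm
    rw [this, hv, inner_add_left]
    have e1 : (⟪T x, v⟫_ℂ : ℂ) = ⟪x, adjoint T v⟫_ℂ := by
      rw [← adjoint_inner_left, adjoint_adjoint]
    have e2 : (⟪D w, v⟫_ℂ : ℂ) = ⟪w, D v⟫_ℂ := by
      rw [← adjoint_inner_left, hDsa.adjoint_eq]
    rw [map_add, e1, e2]
    have c1 : RCLike.re (⟪x, adjoint T v⟫_ℂ) ≤ ‖x‖ * ‖adjoint T v‖ :=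
      (re_inner_le_norm _ _)
    have c2 : RCLike.re (⟪w, D v⟫_ℂ) ≤ ‖w‖ * ‖D v‖ := (re_inner_le_norm _ _)
    linarith
  have id1 : ‖adjoint T v‖ ^ 2 + ‖D v‖ ^ 2 = ‖v‖ ^ 2 := aux_id₁ T D hDsa hD v
  nlinarith [sq_nonneg (‖x‖ * ‖D v‖ - ‖w‖ * ‖adjoint T v‖), norm_nonneg v,
    norm_nonneg x, norm_nonneg w, norm_nonneg (adjoint T v), norm_nonneg (D v),
    sq_nonneg (‖v‖^2 - (‖x‖^2 + ‖w‖^2))]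

theorem block_triangular_contraction_of_DMP
    {H₁ H₂ : Type*} [NormedAddCommGroup H₁] [InnerProductSpace ℂ H₁] [CompleteSpace H₁]
    [NormedAddCommGroup H₂] [InnerProductSpace ℂ H₂] [CompleteSpace H₂]
    (T₁ D₁ : H₁ →L[ℂ] H₁) (T₂ D₂ : H₂ →L[ℂ] H₂) (X C : H₂ →L[ℂ] H₁)
    (hT₁ : ‖T₁‖ ≤ 1) (hT₂ : ‖T₂‖ ≤ 1) (hC : ‖C‖ ≤ 1)
    (hD₁pos : D₁.IsPositive) (hD₁ : D₁ ∘L D₁ = 1 - T₁ ∘L adjoint T₁)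
    (hD₂pos : D₂.IsPositive) (hD₂ : D₂ ∘L D₂ = 1 - adjoint T₂ ∘L T₂)
    (hX : X = D₁ ∘L C ∘L D₂) :
    ‖((WithLp.prodContinuousLinearEquiv 2 ℂ H₁ H₂).symm.toContinuousLinearMap ∘L
        ((T₁ ∘L fst ℂ H₁ H₂ + X ∘L snd ℂ H₁ H₂).prod (T₂ ∘L snd ℂ H₁ H₂)) ∘L
        (WithLp.prodContinuousLinearEquiv 2 ℂ H₁ H₂).toContinuousLinearMap)‖ ≤ 1 := by
  apply opNorm_le_bound _ zero_le_one
  intro p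
  rw [one_mul]
  set x := ((WithLp.prodContinuousLinearEquiv 2 ℂ H₁ H₂) p).1 with hx
  set y := ((WithLp.prodContinuousLinearEquiv 2 ℂ H₁ H₂) p).2 with hy
  -- identity for the column [D₂; T₂]
  have id2 : ‖D₂ y‖ ^ 2 + ‖T₂ y‖ ^ 2 = ‖y‖ ^ 2 := by
    have h1 : (⟪D₂ y, D₂ y⟫_ℂ : ℂ) = ⟪(D₂ ∘L D₂) y, y⟫_ℂ := by
      have h := adjoint_inner_right D₂ (D₂ y) y
      rw [hD₂pos.isSelfAdjoint.adjoint_eq] at h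
      rw [comp_apply, ← h]
    have h2 : (⟪T₂ y, T₂ y⟫_ℂ : ℂ) = ⟪(adjoint T₂ ∘L T₂) y, y⟫_ℂ := by
      have h := adjoint_inner_right (adjoint T₂) (T₂ y) y
      rw [adjoint_adjoint] at h
      rw [comp_apply, ← h]
    have := congrArg (fun A : H₂ →L[ℂ] H₂ => RCLike.re (⟪A y, y⟫_ℂ)) hD₂
    simp only [sub_apply, ContinuousLinearMap.one_apply, inner_sub_left, map_sub] at this
    have hv : RCLike.re (⟪y, y⟫_ℂ) = ‖y‖ ^ 2 := inner_self_eq_norm_sq y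
    have hDv : RCLike.re (⟪(D₂ ∘L D₂) y, y⟫_ℂ) = ‖D₂ y‖ ^ 2 := by
      rw [← h1]; exact inner_self_eq_norm_sq _
    have hTv : RCLike.re (⟪(adjoint T₂ ∘L T₂) y, y⟫_ℂ) = ‖T₂ y‖ ^ 2 := by
      rw [← h2]; exact inner_self_eq_norm_sq _
    rw [hDv, hv, hTv] at this
    linarith
  have hCle : ‖C (D₂ y)‖ ≤ ‖D₂ y‖ := by
    calc ‖C (D₂ y)‖ ≤ ‖C‖ * ‖D₂ y‖ := le_opNorm _ _
    _ ≤ 1 * ‖D₂ y‖ := by gcongr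
    _ = ‖D₂ y‖ := one_mul _
  have row : ‖T₁ x + X y‖ ^ 2 ≤ ‖x‖ ^ 2 + ‖C (D₂ y)‖ ^ 2 := by
    have := aux_row T₁ D₁ hD₁pos.isSelfAdjoint hD₁ x (C (D₂ y))
    rw [hX]
    simpa using this
  have lhs_sq : ‖((WithLp.prodContinuousLinearEquiv 2 ℂ H₁ H₂).symm.toContinuousLinearMap ∘L
        ((T₁ ∘L fst ℂ H₁ H₂ + X ∘L snd ℂ H₁ H₂).prod (T₂ ∘L snd ℂ H₁ H₂)) ∘L
        (WithLp.prodContinuousLinearEquiv 2 ℂ H₁ H₂).toContinuousLinearMap) p‖ ^ 2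
      = ‖T₁ x + X y‖ ^ 2 + ‖T₂ y‖ ^ 2 := by
    rw [comp_apply, comp_apply]
    rw [WithLp.prod_norm_sq_eq_of_L2]
    simp [hx, hy]
  have rhs_sq : ‖p‖ ^ 2 = ‖x‖ ^ 2 + ‖y‖ ^ 2 := by
    rw [WithLp.prod_norm_sq_eq_of_L2]
    simp [hx, hy]
  have sq_le : ‖((WithLp.prodContinuousLinearEquiv 2 ℂ H₁ H₂).symm.toContinuousLinearMap ∘L
        ((T₁ ∘L fst ℂ H₁ H₂ + X ∘L snd ℂ H₁ H₂).prod (T₂ ∘L snd ℂ H₁ H₂)) ∘L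
        (WithLp.prodContinuousLinearEquiv 2 ℂ H₁ H₂).toContinuousLinearMap) p‖ ^ 2 ≤ ‖p‖ ^ 2 := by
    rw [lhs_sq, rhs_sq]
    have hsq : ‖C (D₂ y)‖ ^ 2 ≤ ‖D₂ y‖ ^ 2 := by
      apply sq_le_sq' _ hCle
      linarith [norm_nonneg (C (D₂ y))]
    linarith
  have := Real.sqrt_le_sqrt sq_le
  rwa [Real.sqrt_sq (norm_nonneg _), Real.sqrt_sq (norm_nonneg _)] at this
end

section
/- Let T₁, T₂ be contractions on Hilbert spaces H₁, H₂ and let X : H₂ → H₁ be bounded. If the block operator [[T₁, X],[0, T₂]] on H₁ ⊕ H₂ is a contraction, then there exists a contraction C : H₂ → H₁ such that X = (I - T₁T₁*)^{1/2} C (I - T₂*T₂)^{1/2}. -/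
open ContinuousLinearMap
open scoped NNReal

local notation "⟪" x ", " y "⟫" => @inner ℂ _ _ x y

private lemma quad_aux (a d bb r : ℝ) (hd0 : 0 ≤ d) (hbb0 : 0 ≤ bb)
    (hq : ∀ t : ℝ, (r - t * a ^ 2) ^ 2 ≤ (a ^ 2 + d ^ 2) * (t ^ 2 * a ^ 2 + bb ^ 2)) :
    r ≤ d * bb := by
  by_cases hdz : d = 0
  · subst hdz
    by_cases haz : a = 0
    · have h := hq 0
      rw [haz] at h
      norm_num at h
      nlinarith [h]
    · by_contra hcon
      push_neg at hcon
      have hrpos : 0 < r := lt_of_le_of_lt (by positivity) hcon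
      have hapos : 0 < a ^ 2 := lt_of_le_of_ne (sq_nonneg a) (Ne.symm (pow_ne_zero 2 haz))
      set t₀ := (r ^ 2 - a ^ 2 * bb ^ 2 - 1) / (2 * a ^ 2 * r) with ht₀
      have h := hq t₀
      have hkey : r ^ 2 - 2 * (t₀ * a ^ 2) * r = a ^ 2 * bb ^ 2 + 1 := by
        rw [ht₀]
        have hne : 2 * a ^ 2 * r ≠ 0 := by positivity
        field_simp
        ring
      nlinarith [h, hkey, sq_nonneg (t₀ * a ^ 2)]
  · have hdpos : 0 < d := lt_of_le_of_ne hd0 (Ne.symm hdz)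
    have h := hq (-(r / d ^ 2))
    have hd2 : (0:ℝ) < d ^ 2 := by positivity
    have h2 : (r * (d ^ 2 + a ^ 2)) ^ 2 ≤ (a ^ 2 + d ^ 2) * (r ^ 2 * a ^ 2 + bb ^ 2 * (d ^ 2) ^ 2) := by
      have hexp : (r - (-(r / d ^ 2)) * a ^ 2) = (r * (d ^ 2 + a ^ 2)) / d ^ 2 := by
        field_simp
        ring
      have hexp2 : (-(r / d ^ 2)) ^ 2 * a ^ 2 + bb ^ 2
          = (r ^ 2 * a ^ 2 + bb ^ 2 * (d ^ 2) ^ 2) / (d ^ 2) ^ 2 := by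
        field_simp
      rw [hexp, hexp2, div_pow] at h
      rw [div_le_iff₀ (by positivity : (0:ℝ) < (d^2)^2)] at h
      calc (r * (d ^ 2 + a ^ 2)) ^ 2
          ≤ (a ^ 2 + d ^ 2) * ((r ^ 2 * a ^ 2 + bb ^ 2 * (d ^ 2) ^ 2) / (d ^ 2) ^ 2) * (d ^ 2) ^ 2 := h
        _ = (a ^ 2 + d ^ 2) * (r ^ 2 * a ^ 2 + bb ^ 2 * (d ^ 2) ^ 2) := by field_simp
    have h3 : r ^ 2 * d ^ 2 ≤ bb ^ 2 * (d ^ 2) ^ 2 := by nlinarith [sq_nonneg r, sq_nonneg a]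
    have h4 : r ^ 2 ≤ (d * bb) ^ 2 := by
      have h5 : r ^ 2 * d ^ 2 ≤ (d * bb) ^ 2 * d ^ 2 := by nlinarith
      exact le_of_mul_le_mul_right h5 hd2
    nlinarith [sq_nonneg (r - d * bb), sq_nonneg (r + d * bb), mul_nonneg hd0 hbb0]

/-- Douglas-type extension: if `‖X v‖ ≤ ‖D v‖` for all `v`, then there is a contraction `Y`
with `Y ∘ D = X` (pointwise) that vanishes on the orthogonal complement of the closure of
the range of `D`. -/
private lemma douglas_ext {E F : Type*} [NormedAddCommGroup E] [InnerProductSpace ℂ E]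
    [CompleteSpace E] [NormedAddCommGroup F] [InnerProductSpace ℂ F] [CompleteSpace F]
    (D : E →L[ℂ] E) (X : E →L[ℂ] F) (hb : ∀ v, ‖X v‖ ≤ ‖D v‖) :
    ∃ Y : E →L[ℂ] F, ‖Y‖ ≤ 1 ∧ (∀ v, Y (D v) = X v) ∧
      ∀ w ∈ ((LinearMap.range (D : E →ₗ[ℂ] E)).topologicalClosure)ᗮ, Y w = 0 := by
  classical
  set R : Submodule ℂ E := LinearMap.range (D : E →ₗ[ℂ] E) with hR
  set K : Submodule ℂ E := R.topologicalClosure with hK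
  haveI : CompleteSpace K := by
    rw [hK]; exact R.isClosed_topologicalClosure.completeSpace_coe
  -- the map ξ : range D → F, ξ (D v) = X v
  have hker : LinearMap.ker (D : E →ₗ[ℂ] E) ≤ LinearMap.ker (X : E →ₗ[ℂ] F) := by
    intro v hv
    simp only [LinearMap.mem_ker] at hv ⊢
    have := hb v
    rw [show D v = (0:E) from hv] at this
    simpa using norm_le_zero_iff.mp (by simpa using this)
  set ξ : R →ₗ[ℂ] F :=
    (Submodule.liftQ (LinearMap.ker (D : E →ₗ[ℂ] E)) (X : E →ₗ[ℂ] F) hker) ∘ₗ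
      ((LinearMap.quotKerEquivRange (D : E →ₗ[ℂ] E)).symm : R →ₗ[ℂ] _) with hξdef
  have hξ : ∀ (v : E) (hv : D v ∈ R), ξ ⟨D v, hv⟩ = X v := by
    intro v hv
    have h1 : (LinearMap.quotKerEquivRange (D : E →ₗ[ℂ] E)).symm ⟨D v, hv⟩ =
        Submodule.Quotient.mk v := by
      simpa using LinearMap.quotKerEquivRange_symm_apply_image (D : E →ₗ[ℂ] E) v hv
    simp only [hξdef, LinearMap.coe_comp, LinearEquiv.coe_coe, Function.comp_apply, h1,
      Submodule.liftQ_apply, ContinuousLinearMap.coe_coe]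
  have hξnorm : ∀ y : R, ‖ξ y‖ ≤ ‖(y : E)‖ := by
    rintro ⟨-, ⟨v, rfl⟩⟩
    exact le_trans (le_of_eq (congrArg norm (hξ v ⟨v, rfl⟩))) (hb v)
  set P : E →L[ℂ] K := K.orthogonalProjectionOnto with hP
  have hRK : R ≤ K := Submodule.le_topologicalClosure R
  set S : Submodule ℂ E := R ⊔ Kᗮ with hS
  have hmemP : ∀ s ∈ S, ((P s : E)) ∈ R := by
    intro s hs
    obtain ⟨d, hd, w, hw, rfl⟩ := Submodule.mem_sup.mp hs
    have h1 : P d = ⟨d, hRK hd⟩ :=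
      Submodule.orthogonalProjectionOnto_mem_subspace_eq_self (⟨d, hRK hd⟩ : K)
    have h2 : P w = 0 :=
      Submodule.orthogonalProjectionOnto_apply_of_mem_orthogonal hw
    rw [map_add, h1, h2]
    simpa using hd
  set q : S →ₗ[ℂ] R :=
    { toFun := fun s => ⟨(P s : E), hmemP s s.2⟩
      map_add' := fun s t => Subtype.ext (by simp)
      map_smul' := fun c s => Subtype.ext (by simp) } with hq
  have hPnorm : ∀ s : S, ‖((P s : E))‖ ≤ ‖(s : E)‖ := by
    intro s
    calc ‖((P (s : E) : E))‖ = ‖P (s : E)‖ := rfl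
      _ ≤ ‖P‖ * ‖(s : E)‖ := P.le_opNorm _
      _ ≤ 1 * ‖(s : E)‖ := by
          gcongr
          exact Submodule.orthogonalProjectionOnto_norm_le K
      _ = ‖(s : E)‖ := one_mul _
  set A₀ : S →ₗ[ℂ] F := ξ ∘ₗ q with hA₀
  have hA₀b : ∀ s : S, ‖A₀ s‖ ≤ 1 * ‖s‖ := by
    intro s
    rw [one_mul]
    calc ‖A₀ s‖ = ‖ξ (q s)‖ := rfl
      _ ≤ ‖((q s : E))‖ := hξnorm _
      _ = ‖((P s : E))‖ := rfl
      _ ≤ ‖(s : E)‖ := hPnorm s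
  set A : S →L[ℂ] F := A₀.mkContinuous 1 hA₀b with hA
  set e : S →L[ℂ] E := S.subtypeL with he
  have h_dense : DenseRange e := by
    have htop : S.topologicalClosure = ⊤ := by
      rw [eq_top_iff, ← Submodule.sup_orthogonal_of_hasOrthogonalProjection (K := K)]
      refine sup_le ?_ ?_
      · exact Submodule.topologicalClosure_mono le_sup_left
      · exact le_trans le_sup_right (Submodule.le_topologicalClosure S)
    have hds : Dense (S : Set E) := by
      have h := congrArg (fun (s : Submodule ℂ E) => (s : Set E)) htop
      simp only [Submodule.topologicalClosure_coe, Submodule.top_coe] at h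
      rw [dense_iff_closure_eq, h]
    exact hds.denseRange_val
  have h_ub : ∀ x : S, ‖x‖ ≤ (1 : ℝ≥0) * ‖e x‖ := by
    intro x; simp [he]
  set Y : E →L[ℂ] F :=
    A.extend e with hY
  have hYnorm : ‖Y‖ ≤ 1 := by
    have h1 := A.opNorm_extend_le h_dense h_ub
    have h2 : ‖A‖ ≤ 1 := LinearMap.mkContinuous_norm_le _ zero_le_one _
    calc ‖Y‖ ≤ (1:ℝ≥0) * ‖A‖ := h1
      _ ≤ 1 := by simpa using h2
  have hYe : ∀ s : S, Y (s : E) = A s := fun s => A.extend_eq h_dense (isUniformEmbedding_of_bound e h_ub).isUniformInducing s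
  refine ⟨Y, hYnorm, ?_, ?_⟩
  · intro v
    have hm : D v ∈ S := Submodule.mem_sup_left ⟨v, rfl⟩
    have h1 : Y (D v) = A ⟨D v, hm⟩ := hYe ⟨D v, hm⟩
    rw [h1]
    have h2 : A ⟨D v, hm⟩ = ξ (q ⟨D v, hm⟩) := rfl
    have hDvK : D v ∈ K := hRK ⟨v, rfl⟩
    have h3 : q ⟨D v, hm⟩ = ⟨D v, ⟨v, rfl⟩⟩ := by
      apply Subtype.ext
      show ((P (D v) : E)) = D v
      rw [show P (D v) = ⟨D v, hDvK⟩ from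
        Submodule.orthogonalProjectionOnto_mem_subspace_eq_self (⟨D v, hDvK⟩ : K)]
    rw [h2, h3]; exact hξ v _
  · intro w hw
    have hm : w ∈ S := Submodule.mem_sup_right hw
    have h1 : Y w = A ⟨w, hm⟩ := hYe ⟨w, hm⟩
    rw [h1]
    have h3 : q ⟨w, hm⟩ = 0 := by
      apply Subtype.ext
      show ((P w : E)) = 0
      rw [Submodule.orthogonalProjectionOnto_apply_of_mem_orthogonal hw]
      rfl
    show ξ (q ⟨w, hm⟩) = 0
    rw [h3, map_zero]

set_option maxHeartbeats 1000000 in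
theorem DMP_of_block_triangular_contraction
    {H₁ H₂ : Type*} [NormedAddCommGroup H₁] [InnerProductSpace ℂ H₁] [CompleteSpace H₁]
    [NormedAddCommGroup H₂] [InnerProductSpace ℂ H₂] [CompleteSpace H₂]
    (T₁ D₁ : H₁ →L[ℂ] H₁) (T₂ D₂ : H₂ →L[ℂ] H₂) (X : H₂ →L[ℂ] H₁)
    (hT₁ : ‖T₁‖ ≤ 1) (hT₂ : ‖T₂‖ ≤ 1)
    (hD₁pos : D₁.IsPositive) (hD₁ : D₁ ∘L D₁ = 1 - T₁ ∘L adjoint T₁)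
    (hD₂pos : D₂.IsPositive) (hD₂ : D₂ ∘L D₂ = 1 - adjoint T₂ ∘L T₂)
    (hblock :
      ‖((WithLp.prodContinuousLinearEquiv 2 ℂ H₁ H₂).symm.toContinuousLinearMap ∘L
          ((T₁ ∘L fst ℂ H₁ H₂ + X ∘L snd ℂ H₁ H₂).prod (T₂ ∘L snd ℂ H₁ H₂)) ∘L
          (WithLp.prodContinuousLinearEquiv 2 ℂ H₁ H₂).toContinuousLinearMap)‖ ≤ 1) :
    ∃ C : H₂ →L[ℂ] H₁, ‖C‖ ≤ 1 ∧ X = D₁ ∘L C ∘L D₂ := by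
  have hadj1 : adjoint D₁ = D₁ := by
    rw [← ContinuousLinearMap.star_eq_adjoint]; exact hD₁pos.isSelfAdjoint
  have hadj2 : adjoint D₂ = D₂ := by
    rw [← ContinuousLinearMap.star_eq_adjoint]; exact hD₂pos.isSelfAdjoint
  -- the basic norm inequality from the block contraction
  have key1 : ∀ (a : H₁) (b : H₂),
      ‖T₁ a + X b‖ ^ 2 + ‖T₂ b‖ ^ 2 ≤ ‖a‖ ^ 2 + ‖b‖ ^ 2 := by
    intro a b
    set E2 := WithLp.prodContinuousLinearEquiv 2 ℂ H₁ H₂ with hE2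
    set B := (E2.symm.toContinuousLinearMap ∘L
        ((T₁ ∘L fst ℂ H₁ H₂ + X ∘L snd ℂ H₁ H₂).prod (T₂ ∘L snd ℂ H₁ H₂)) ∘L
        E2.toContinuousLinearMap) with hB
    set v := E2.symm (a, b) with hv
    have h1 : B v = E2.symm (T₁ a + X b, T₂ b) := by
      rw [hB, hv]
      simp only [ContinuousLinearMap.coe_comp', Function.comp_apply,
        ContinuousLinearEquiv.coe_coe, ContinuousLinearEquiv.apply_symm_apply,
        ContinuousLinearMap.prod_apply, ContinuousLinearMap.add_apply,
        ContinuousLinearMap.coe_fst', ContinuousLinearMap.coe_snd']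
    have h2 : ‖B v‖ ≤ ‖v‖ := by
      calc ‖B v‖ ≤ ‖B‖ * ‖v‖ := B.le_opNorm v
        _ ≤ 1 * ‖v‖ := by gcongr
        _ = ‖v‖ := one_mul _
    have h3 : ‖B v‖ ^ 2 ≤ ‖v‖ ^ 2 := by
      have := pow_le_pow_left₀ (norm_nonneg (B v)) h2 2
      simpa using this
    have h4 : ∀ (x : H₁) (y : H₂), ‖E2.symm (x, y)‖ ^ 2 = ‖x‖ ^ 2 + ‖y‖ ^ 2 := by
      intro x y
      rw [WithLp.prod_norm_sq_eq_of_L2]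
      rfl
    rw [h1, hv, h4, h4] at h3
    exact h3
  -- norms of defect operators
  have hn1 : ∀ g : H₁, ‖D₁ g‖ ^ 2 = ‖g‖ ^ 2 - ‖adjoint T₁ g‖ ^ 2 := by
    intro g
    have h1 : (⟪D₁ g, D₁ g⟫ : ℂ) = ⟪g, g⟫ - ⟪adjoint T₁ g, adjoint T₁ g⟫ := by
      conv_lhs => rw [← hadj1]
      rw [adjoint_inner_left, hadj1]
      have hcomp : D₁ (D₁ g) = g - T₁ (adjoint T₁ g) := by
        have := congrFun (congrArg DFunLike.coe hD₁) g
        simpa using this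
      rw [hcomp, inner_sub_right, ← adjoint_inner_left T₁]
    have h2 : ((‖D₁ g‖ : ℂ)) ^ 2 = ((‖g‖ : ℂ)) ^ 2 - ((‖adjoint T₁ g‖ : ℂ)) ^ 2 := by
      simpa [inner_self_eq_norm_sq_to_K] using h1
    exact_mod_cast h2
  have hn2 : ∀ b : H₂, ‖D₂ b‖ ^ 2 = ‖b‖ ^ 2 - ‖T₂ b‖ ^ 2 := by
    intro b
    have h1 : (⟪D₂ b, D₂ b⟫ : ℂ) = ⟪b, b⟫ - ⟪T₂ b, T₂ b⟫ := by
      conv_lhs => rw [← hadj2]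
      rw [adjoint_inner_left, hadj2]
      have hcomp : D₂ (D₂ b) = b - adjoint T₂ (T₂ b) := by
        have := congrFun (congrArg DFunLike.coe hD₂) b
        simpa using this
      rw [hcomp, inner_sub_right, adjoint_inner_right]
    have h2 : ((‖D₂ b‖ : ℂ)) ^ 2 = ((‖b‖ : ℂ)) ^ 2 - ((‖T₂ b‖ : ℂ)) ^ 2 := by
      simpa [inner_self_eq_norm_sq_to_K] using h1
    exact_mod_cast h2
  -- the key sesquilinear inequality
  have claim : ∀ (g : H₁) (b : H₂), RCLike.re (⟪g, X b⟫ : ℂ) ≤ ‖D₁ g‖ * ‖D₂ b‖ := by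
    intro g b
    set a := ‖adjoint T₁ g‖ with ha
    set d := ‖D₁ g‖ with hd
    set bb := ‖D₂ b‖ with hbb
    set r := RCLike.re (⟪g, X b⟫ : ℂ) with hr
    have ha0 : 0 ≤ a := norm_nonneg _
    have hd0 : 0 ≤ d := norm_nonneg _
    have hbb0 : 0 ≤ bb := norm_nonneg _
    have hg2 : ‖g‖ ^ 2 = a ^ 2 + d ^ 2 := by
      have := hn1 g; rw [← hd, ← ha] at this; linarith
    have hq : ∀ t : ℝ, (r - t * a ^ 2) ^ 2 ≤ (a ^ 2 + d ^ 2) * (t ^ 2 * a ^ 2 + bb ^ 2) := by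
      intro t
      set w := X b - (t : ℂ) • T₁ (adjoint T₁ g) with hw
      have h1 : T₁ ((-(t : ℂ)) • adjoint T₁ g) + X b = w := by
        rw [map_smul]; rw [hw]; module
      have h2 := key1 ((-(t : ℂ)) • adjoint T₁ g) b
      rw [h1] at h2
      have h3 : ‖(-(t : ℂ)) • adjoint T₁ g‖ ^ 2 = t ^ 2 * a ^ 2 := by
        rw [norm_smul, norm_neg, Complex.norm_real, Real.norm_eq_abs, mul_pow, sq_abs, ha]
      have h4 : ‖w‖ ^ 2 ≤ t ^ 2 * a ^ 2 + bb ^ 2 := by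
        have := hn2 b
        rw [h3] at h2
        linarith
      have h5 : RCLike.re (⟪g, w⟫ : ℂ) = r - t * a ^ 2 := by
        rw [hw, inner_sub_right, inner_smul_right]
        have hinner : (⟪g, T₁ (adjoint T₁ g)⟫ : ℂ) = ((a : ℂ)) ^ 2 := by
          rw [← adjoint_inner_left T₁, inner_self_eq_norm_sq_to_K, ← ha]
          norm_cast
        rw [hinner, show ((t : ℂ)) * ((a : ℂ)) ^ 2 = ((t * a ^ 2 : ℝ) : ℂ) by push_cast; ring,
          map_sub]
        simp [hr]
        left
        norm_cast
      have h6 : (RCLike.re (⟪g, w⟫ : ℂ)) ^ 2 ≤ ‖g‖ ^ 2 * ‖w‖ ^ 2 := by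
        have hre : |RCLike.re (⟪g, w⟫ : ℂ)| ≤ ‖(⟪g, w⟫ : ℂ)‖ := RCLike.abs_re_le_norm _
        have hcs : ‖(⟪g, w⟫ : ℂ)‖ ≤ ‖g‖ * ‖w‖ := norm_inner_le_norm g w
        have h7 : |RCLike.re (⟪g, w⟫ : ℂ)| ≤ ‖g‖ * ‖w‖ := le_trans hre hcs
        nlinarith [abs_nonneg (RCLike.re (⟪g, w⟫ : ℂ)), sq_abs (RCLike.re (⟪g, w⟫ : ℂ)),
          norm_nonneg g, norm_nonneg w]
      rw [h5] at h6
      calc (r - t * a ^ 2) ^ 2 ≤ ‖g‖ ^ 2 * ‖w‖ ^ 2 := h6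
        _ ≤ ‖g‖ ^ 2 * (t ^ 2 * a ^ 2 + bb ^ 2) :=
            mul_le_mul_of_nonneg_left h4 (sq_nonneg ‖g‖)
        _ = (a ^ 2 + d ^ 2) * (t ^ 2 * a ^ 2 + bb ^ 2) := by rw [hg2]
    exact quad_aux a d bb r hd0 hbb0 hq
  have keyIneq : ∀ (g : H₁) (b : H₂), ‖(⟪g, X b⟫ : ℂ)‖ ≤ ‖D₁ g‖ * ‖D₂ b‖ := by
    intro g b
    set z : ℂ := ⟪g, X b⟫ with hz
    rcases eq_or_ne z 0 with h0 | h0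
    · rw [h0, norm_zero]
      exact mul_nonneg (norm_nonneg _) (norm_nonneg _)
    · set c : ℂ := (‖z‖ : ℂ) / z with hc
      have hzn : ‖z‖ ≠ 0 := norm_ne_zero_iff.mpr h0
      have hcz : ‖c‖ = 1 := by
        rw [hc, norm_div, Complex.norm_real, Real.norm_eq_abs, abs_norm, div_self hzn]
      have h1 : (⟪g, X (c • b)⟫ : ℂ) = (‖z‖ : ℂ) := by
        rw [map_smul, inner_smul_right, ← hz, hc, div_mul_cancel₀]
        exact h0
      have h2 := claim g (c • b)
      rw [h1] at h2
      rw [show RCLike.re ((‖z‖ : ℝ) : ℂ) = ‖z‖ from rfl] at h2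
      have h3 : ‖D₂ (c • b)‖ = ‖D₂ b‖ := by
        rw [map_smul, norm_smul, hcz, one_mul]
      rw [h3] at h2
      exact h2
  -- first Douglas step: X = Y ∘ D₂
  have hXD2 : ∀ b : H₂, ‖X b‖ ≤ ‖D₂ b‖ := by
    intro b
    have h1 := key1 0 b
    simp only [map_zero, zero_add, norm_zero] at h1
    have h2 := hn2 b
    have h3 : ‖X b‖ ^ 2 ≤ ‖D₂ b‖ ^ 2 := by
      simp at h1
      linarith
    nlinarith [norm_nonneg (X b), norm_nonneg (D₂ b)]
  obtain ⟨Y, hY1, hY2, hY3⟩ := douglas_ext D₂ X hXD2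
  -- second step: ‖Y* g‖ ≤ ‖D₁ g‖
  have hYadj : ∀ g : H₁, ‖adjoint Y g‖ ≤ ‖D₁ g‖ := by
    intro g
    set K : Submodule ℂ H₂ := (LinearMap.range (D₂ : H₂ →ₗ[ℂ] H₂)).topologicalClosure with hK
    haveI : CompleteSpace K := by
      rw [hK]
      exact (LinearMap.range (D₂ : H₂ →ₗ[ℂ] H₂)).isClosed_topologicalClosure.completeSpace_coe
    set u := adjoint Y g with hu
    have hKb : ∀ v ∈ K, ‖(⟪g, Y v⟫ : ℂ)‖ ≤ ‖D₁ g‖ * ‖v‖ := by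
      have hclosed : IsClosed {v : H₂ | ‖(⟪g, Y v⟫ : ℂ)‖ ≤ ‖D₁ g‖ * ‖v‖} :=
        isClosed_le ((continuous_const.inner Y.continuous).norm)
          (continuous_const.mul continuous_norm)
      have hsub : ((LinearMap.range (D₂ : H₂ →ₗ[ℂ] H₂)) : Set H₂) ⊆
          {v : H₂ | ‖(⟪g, Y v⟫ : ℂ)‖ ≤ ‖D₁ g‖ * ‖v‖} := by
        rintro - ⟨b, rfl⟩
        show ‖(⟪g, Y (D₂ b)⟫ : ℂ)‖ ≤ ‖D₁ g‖ * ‖D₂ b‖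
        rw [hY2 b]
        exact keyIneq g b
      intro v hv
      have : (K : Set H₂) ⊆ {v : H₂ | ‖(⟪g, Y v⟫ : ℂ)‖ ≤ ‖D₁ g‖ * ‖v‖} := by
        rw [hK, Submodule.topologicalClosure_coe]
        exact closure_minimal hsub hclosed
      exact this hv
    set Pu := (K.orthogonalProjectionOnto u : H₂) with hPu
    have hYu : Y u = Y Pu := by
      have h1 : u - Pu ∈ Kᗮ := K.sub_starProjection_mem_orthogonal u
      have h2 := hY3 _ h1
      rw [map_sub] at h2
      exact sub_eq_zero.mp h2
    have hnormsq : ‖u‖ ^ 2 = RCLike.re (⟪g, Y u⟫ : ℂ) := by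
      have h1 : (⟪u, u⟫ : ℂ) = ⟪g, Y u⟫ := by
        rw [hu, adjoint_inner_left]
      rw [← h1, inner_self_eq_norm_sq_to_K, ← RCLike.ofReal_pow, RCLike.ofReal_re]
    have hPuK : Pu ∈ K := by
      rw [hPu]; exact SetLike.coe_mem _
    have hPun : ‖Pu‖ ≤ ‖u‖ := by
      calc ‖Pu‖ = ‖K.orthogonalProjectionOnto u‖ := rfl
        _ ≤ ‖K.orthogonalProjectionOnto‖ * ‖u‖ := (K.orthogonalProjectionOnto).le_opNorm u
        _ ≤ 1 * ‖u‖ := by gcongr; exact Submodule.orthogonalProjectionOnto_norm_le K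
        _ = ‖u‖ := one_mul _
    have hmain : ‖u‖ ^ 2 ≤ ‖D₁ g‖ * ‖u‖ := by
      calc ‖u‖ ^ 2 = RCLike.re (⟪g, Y u⟫ : ℂ) := hnormsq
        _ = RCLike.re (⟪g, Y Pu⟫ : ℂ) := by rw [hYu]
        _ ≤ ‖(⟪g, Y Pu⟫ : ℂ)‖ := RCLike.re_le_norm _
        _ ≤ ‖D₁ g‖ * ‖Pu‖ := hKb Pu hPuK
        _ ≤ ‖D₁ g‖ * ‖u‖ := mul_le_mul_of_nonneg_left hPun (norm_nonneg _)
    rcases eq_or_lt_of_le (norm_nonneg u) with h0 | h0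
    · rw [← h0]; exact norm_nonneg _
    · nlinarith [hmain]
  -- second Douglas step
  obtain ⟨V, hV1, hV2, -⟩ := douglas_ext D₁ (adjoint Y) hYadj
  refine ⟨adjoint V, ?_, ?_⟩
  · have hnV : ‖adjoint V‖ = ‖V‖ := LinearIsometryEquiv.norm_map ContinuousLinearMap.adjoint V
    rw [hnV]
    exact hV1
  · have hDC : D₁ ∘L adjoint V = Y := by
      ext v
      apply ext_inner_left ℂ
      intro g
      calc (⟪g, (D₁ ∘L adjoint V) v⟫ : ℂ) = ⟪g, D₁ (adjoint V v)⟫ := rfl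
        _ = ⟪g, adjoint D₁ (adjoint V v)⟫ := by rw [hadj1]
        _ = ⟪D₁ g, adjoint V v⟫ := adjoint_inner_right _ _ _
        _ = ⟪V (D₁ g), v⟫ := (adjoint_inner_right _ _ _)
        _ = ⟪adjoint Y g, v⟫ := by rw [hV2]
        _ = ⟪g, Y v⟫ := adjoint_inner_left _ _ _
    ext b
    show X b = D₁ (adjoint V (D₂ b))
    have h1 : D₁ (adjoint V (D₂ b)) = (D₁ ∘L adjoint V) (D₂ b) := rfl
    rw [h1, hDC, hY2]
end

section
/- Let P be a contraction on a Hilbert space H and let V on a Hilbert space K ⊇ H be the minimal isometric dilation of P. Then the defect spaces 𝒟_{P*} = closure Ran(I - PP*)^{1/2} and 𝒟_{V*} = closure Ran(I - VV*)^{1/2} are unitarily equivalent (have the same Hilbert space dimension). -/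
open ContinuousLinearMap

/-- If two complete normed spaces receive continuous linear maps with dense range from a common
space, and the two maps have identical norms pointwise, then the targets are isometrically
isomorphic. -/
theorem exists_isometryEquiv_of_norm_eq {X E F : Type*}
    [NormedAddCommGroup X] [NormedSpace ℂ X]
    [NormedAddCommGroup E] [NormedSpace ℂ E] [CompleteSpace E]
    [NormedAddCommGroup F] [NormedSpace ℂ F] [CompleteSpace F]
    (A : X →L[ℂ] E) (B : X →L[ℂ] F) (hA : DenseRange A) (hB : DenseRange B)
    (hnorm : ∀ x, ‖B x‖ = ‖A x‖) : Nonempty (E ≃ₗᵢ[ℂ] F) := by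
  set Aₗ : X →ₗ[ℂ] E := (A : X →ₗ[ℂ] E) with hAₗ
  set Bₗ : X →ₗ[ℂ] F := (B : X →ₗ[ℂ] F) with hBₗ
  have hker : LinearMap.ker Aₗ ≤ LinearMap.ker Bₗ := by
    intro x hx
    have hx0 : A x = 0 := hx
    have : ‖B x‖ = 0 := by rw [hnorm, hx0, norm_zero]
    simpa [LinearMap.mem_ker, hBₗ] using norm_eq_zero.mp this
  let f₀ : ↥(LinearMap.range Aₗ) →ₗ[ℂ] F :=
    ((LinearMap.ker Aₗ).liftQ Bₗ hker).comp
      (Aₗ.quotKerEquivRange.symm : ↥(LinearMap.range Aₗ) →ₗ[ℂ] X ⧸ LinearMap.ker Aₗ)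
  have hf₀ : ∀ x : X, f₀ ⟨Aₗ x, LinearMap.mem_range_self Aₗ x⟩ = B x := by
    intro x
    have h1 := Aₗ.quotKerEquivRange_symm_apply_image x (LinearMap.mem_range_self Aₗ x)
    simp only [f₀, LinearMap.coe_comp, LinearEquiv.coe_coe, Function.comp_apply, h1,
      Submodule.liftQ_apply]
    rfl
  have hf₀norm : ∀ y : ↥(LinearMap.range Aₗ), ‖f₀ y‖ = ‖y‖ := by
    rintro ⟨y, x, rfl⟩
    rw [hf₀ x]
    rw [hnorm x]
    rfl
  let fI : ↥(LinearMap.range Aₗ) →ₗᵢ[ℂ] F := ⟨f₀, hf₀norm⟩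
  have hdense : DenseRange ((LinearMap.range Aₗ).subtypeL) := by
    have hr : Set.range ((LinearMap.range Aₗ).subtypeL) = Set.range A := by
      ext y
      constructor
      · rintro ⟨⟨y, x, rfl⟩, rfl⟩; exact ⟨x, rfl⟩
      · rintro ⟨x, rfl⟩; exact ⟨⟨A x, LinearMap.mem_range_self Aₗ x⟩, rfl⟩
    rw [DenseRange, hr]
    exact hA
  have hui : IsUniformInducing ((LinearMap.range Aₗ).subtypeL) :=
    (isometry_subtype_coe).isUniformInducing
  let g : E →L[ℂ] F := fI.toContinuousLinearMap.extend (LinearMap.range Aₗ).subtypeL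
  have hg : ∀ y, g ((LinearMap.range Aₗ).subtypeL y) = f₀ y := fun y =>
    ContinuousLinearMap.extend_eq _ hdense hui _
  have hgnorm : ∀ e : E, ‖g e‖ = ‖e‖ := by
    intro e
    refine hdense.induction_on e ?_ ?_
    · exact isClosed_eq (continuous_norm.comp g.continuous) continuous_norm
    · intro y
      rw [hg y, hf₀norm y]
      rfl
  let gI : E →ₗᵢ[ℂ] F := ⟨g.toLinearMap, hgnorm⟩
  have hsurj : Function.Surjective gI := by
    have hclosed : IsClosed (Set.range gI) :=
      (gI.isometry.isClosedEmbedding).isClosed_range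
    have hsub : Set.range (B : X → F) ⊆ Set.range gI := by
      rintro _ ⟨x, rfl⟩
      refine ⟨A x, ?_⟩
      have : (A x : E) = (LinearMap.range Aₗ).subtypeL ⟨Aₗ x, LinearMap.mem_range_self Aₗ x⟩ :=
        rfl
      show g (A x) = B x
      rw [this, hg, hf₀]
    intro y
    have : y ∈ closure (Set.range (B : X → F)) := hB y
    have : y ∈ closure (Set.range gI) := closure_mono hsub this
    rwa [hclosed.closure_eq] at this
  exact ⟨LinearIsometryEquiv.ofSurjective gI hsurj⟩

set_option maxHeartbeats 1000000 in
theorem defect_spaces_unitarily_equivalent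
    {K : Type*} [NormedAddCommGroup K] [InnerProductSpace ℂ K] [CompleteSpace K]
    (H : Submodule ℂ K) [CompleteSpace H]
    (P DPs : H →L[ℂ] H) (V DVs : K →L[ℂ] K)
    (hP : ‖P‖ ≤ 1)
    (hV : adjoint V ∘L V = 1)
    (hdil : ∀ (n : ℕ) (h : H), Submodule.orthogonalProjectionOnto H ((V ^ n) (h : K)) = (P ^ n) h)
    (hmin : (Submodule.span ℂ {x : K | ∃ (n : ℕ) (h : H), x = (V ^ n) (h : K)}).topologicalClosure = ⊤)
    (hDPspos : DPs.IsPositive) (hDPs : DPs ∘L DPs = 1 - P ∘L adjoint P)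
    (hDVspos : DVs.IsPositive) (hDVs : DVs ∘L DVs = 1 - V ∘L adjoint V) :
    Nonempty
      (↥(LinearMap.range (DPs : H →ₗ[ℂ] H)).topologicalClosure ≃ₗᵢ[ℂ]
       ↥(LinearMap.range (DVs : K →ₗ[ℂ] K)).topologicalClosure) := by
  classical
  set S : Set K := {x : K | ∃ (n : ℕ) (h : H), x = (V ^ n) (h : K)} with hS
  -- self-adjointness of the defect operators
  have hsaV : adjoint DVs = DVs := ContinuousLinearMap.isSelfAdjoint_iff'.mp hDVspos.isSelfAdjoint
  have hsaP : adjoint DPs = DPs := ContinuousLinearMap.isSelfAdjoint_iff'.mp hDPspos.isSelfAdjoint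
  -- V* agrees with P* on H
  have hVP : ∀ h : H, adjoint V (h : K) = ((adjoint P h : H) : K) := by
    intro h
    have key : ∀ u ∈ Submodule.span ℂ S,
        (inner ℂ u (adjoint V (h : K) - ((adjoint P h : H) : K)) : ℂ) = 0 := by
      intro u hu
      induction hu using Submodule.span_induction with
      | mem x hx =>
        obtain ⟨n, h', rfl⟩ := hx
        rw [inner_sub_right, sub_eq_zero]
        -- for any k : K and hh : H, ⟪k, hh⟫ = ⟪proj k, hh⟫
        have proj_inner : ∀ (k : K) (hh : H),
            (inner ℂ k (hh : K) : ℂ) = inner ℂ ((H.orthogonalProjectionOnto k : H) : K) (hh : K) := by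
          intro k hh
          have hmem := Submodule.sub_starProjection_mem_orthogonal (K := H) k
          have := Submodule.inner_left_of_mem_orthogonal hh.2 hmem
          rw [inner_sub_left, sub_eq_zero] at this
          exact this
        have lhs : (inner ℂ ((V ^ n) (h' : K)) (adjoint V (h : K)) : ℂ)
            = inner ℂ ((P ^ (n + 1)) h' : H) h := by
          rw [ContinuousLinearMap.adjoint_inner_right]
          have : V ((V ^ n) (h' : K)) = (V ^ (n + 1)) (h' : K) := by
            rw [pow_succ']; rfl
          rw [this, proj_inner _ h, hdil (n + 1) h']
          exact (Submodule.coe_inner H _ _).symm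
        have rhs : (inner ℂ ((V ^ n) (h' : K)) (((adjoint P h : H) : K)) : ℂ)
            = inner ℂ ((P ^ (n + 1)) h' : H) h := by
          rw [proj_inner _ (adjoint P h), hdil n h', ← Submodule.coe_inner,
            ContinuousLinearMap.adjoint_inner_right]
          congr 1
          rw [pow_succ']; rfl
        rw [lhs, rhs]
      | zero => simp
      | add x y hx hy ihx ihy => rw [inner_add_left, ihx, ihy, add_zero]
      | smul a x hx ihx => rw [inner_smul_left, ihx, mul_zero]
    have hmemo : adjoint V (h : K) - ((adjoint P h : H) : K) ∈ (Submodule.span ℂ S)ᗮ :=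
      (Submodule.mem_orthogonal _ _).mpr key
    have hbot : (Submodule.span ℂ S)ᗮ = ⊥ :=
      Submodule.topologicalClosure_eq_top_iff.mp hmin
    rw [hbot, Submodule.mem_bot, sub_eq_zero] at hmemo
    exact hmemo
  -- norm identities
  have hv2 : ∀ x : K, (inner ℂ (DVs x) (DVs x) : ℂ)
      = inner ℂ x x - inner ℂ (adjoint V x) (adjoint V x) := by
    intro x
    have step : (inner ℂ (DVs x) (DVs x) : ℂ) = inner ℂ x ((DVs ∘L DVs) x) := by
      conv_rhs => rw [ContinuousLinearMap.comp_apply,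
        ← ContinuousLinearMap.adjoint_inner_left DVs, hsaV]
    rw [step, hDVs]
    simp only [ContinuousLinearMap.sub_apply, ContinuousLinearMap.one_apply,
      ContinuousLinearMap.comp_apply, inner_sub_right]
    rw [← ContinuousLinearMap.adjoint_inner_left V]
  have hp2 : ∀ x : H, (inner ℂ (DPs x) (DPs x) : ℂ)
      = inner ℂ x x - inner ℂ (adjoint P x) (adjoint P x) := by
    intro x
    have step : (inner ℂ (DPs x) (DPs x) : ℂ) = inner ℂ x ((DPs ∘L DPs) x) := by
      conv_rhs => rw [ContinuousLinearMap.comp_apply,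
        ← ContinuousLinearMap.adjoint_inner_left DPs, hsaP]
    rw [step, hDPs]
    simp only [ContinuousLinearMap.sub_apply, ContinuousLinearMap.one_apply,
      ContinuousLinearMap.comp_apply, inner_sub_right]
    rw [← ContinuousLinearMap.adjoint_inner_left P]
  have hnormeq : ∀ h : H, ‖DVs (h : K)‖ = ‖DPs h‖ := by
    intro h
    have hinner : (inner ℂ (DVs (h : K)) (DVs (h : K)) : ℂ) = inner ℂ (DPs h) (DPs h) := by
      rw [hv2, hp2, hVP h, ← Submodule.coe_inner, ← Submodule.coe_inner]
    have h2 : ‖DVs (h : K)‖ ^ 2 = ‖DPs h‖ ^ 2 := by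
      rw [← inner_self_eq_norm_sq (𝕜 := ℂ), ← inner_self_eq_norm_sq (𝕜 := ℂ), hinner]
    nlinarith [norm_nonneg (DVs (h : K)), norm_nonneg (DPs h)]
  -- DVs kills V^(n+1) of anything
  have hkill : ∀ (n : ℕ) (k : K), DVs ((V ^ (n + 1)) k) = 0 := by
    intro n k
    have hVsV : adjoint V ((V ^ (n + 1)) k) = (V ^ n) k := by
      have : adjoint V ∘L V ^ (n + 1) = V ^ n := by
        rw [pow_succ']
        calc adjoint V ∘L (V * V ^ n) = (adjoint V ∘L V) ∘L V ^ n := by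
              ext x; rfl
          _ = V ^ n := by rw [hV]; ext x; rfl
      exact congrFun (congrArg DFunLike.coe this) k
    have hzero : (DVs ∘L DVs) ((V ^ (n + 1)) k) = 0 := by
      rw [hDVs]
      simp only [ContinuousLinearMap.sub_apply, ContinuousLinearMap.one_apply,
        ContinuousLinearMap.comp_apply, hVsV]
      rw [sub_eq_zero]
      have : V ((V ^ n) k) = (V ^ (n + 1)) k := by rw [pow_succ']; rfl
      rw [this]
    have hin : (inner ℂ (DVs ((V ^ (n + 1)) k)) (DVs ((V ^ (n + 1)) k)) : ℂ) = 0 := by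
      have step : (inner ℂ (DVs ((V ^ (n + 1)) k)) (DVs ((V ^ (n + 1)) k)) : ℂ)
          = inner ℂ ((V ^ (n + 1)) k) ((DVs ∘L DVs) ((V ^ (n + 1)) k)) := by
        conv_rhs => rw [ContinuousLinearMap.comp_apply,
          ← ContinuousLinearMap.adjoint_inner_left DVs, hsaV]
      rw [step, hzero, inner_zero_right]
    exact inner_self_eq_zero.mp hin
  -- set up the two codomains
  set E := (LinearMap.range (DPs : H →ₗ[ℂ] H)).topologicalClosure with hE
  set F := (LinearMap.range (DVs : K →ₗ[ℂ] K)).topologicalClosure with hF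
  haveI : CompleteSpace ↥E :=
    (Submodule.isClosed_topologicalClosure _).isComplete.completeSpace_coe
  haveI : CompleteSpace ↥F :=
    (Submodule.isClosed_topologicalClosure _).isComplete.completeSpace_coe
  -- the maps
  have hmemA : ∀ h : H, DPs h ∈ E := fun h =>
    Submodule.le_topologicalClosure _ (LinearMap.mem_range_self (DPs : H →ₗ[ℂ] H) h)
  have hmemB : ∀ h : H, DVs (h : K) ∈ F := fun h =>
    Submodule.le_topologicalClosure _ (LinearMap.mem_range_self (DVs : K →ₗ[ℂ] K) (h : K))
  let A : ↥H →L[ℂ] ↥E := DPs.codRestrict E hmemA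
  let B : ↥H →L[ℂ] ↥F := (DVs.comp H.subtypeL).codRestrict F hmemB
  -- density of range A
  have hA : DenseRange A := by
    intro x
    have himg : (Subtype.val '' Set.range A) = Set.range (DPs : ↥H → ↥H) := by
      ext y
      constructor
      · rintro ⟨_, ⟨h, rfl⟩, rfl⟩; exact ⟨h, rfl⟩
      · rintro ⟨h, rfl⟩; exact ⟨A h, ⟨h, rfl⟩, rfl⟩
    rw [closure_subtype, himg]
    have hx : (x : ↥H) ∈ closure ((LinearMap.range (DPs : H →ₗ[ℂ] H) : Submodule ℂ ↥H) : Set ↥H) := by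
      have hx2 : (x : ↥H) ∈ (LinearMap.range (DPs : H →ₗ[ℂ] H)).topologicalClosure := x.2
      rw [← SetLike.mem_coe, Submodule.topologicalClosure_coe] at hx2
      exact hx2
    simpa [LinearMap.coe_range] using hx
  -- density of range B : uses minimality
  set W : Submodule ℂ K := Submodule.map (DVs : K →ₗ[ℂ] K) H with hW
  have hWsub : Set.range (DVs : K → K) ⊆ closure (W : Set K) := by
    rintro _ ⟨k, rfl⟩
    have hk : k ∈ closure ((Submodule.span ℂ S : Submodule ℂ K) : Set K) := by
      have hk0 : k ∈ (Submodule.span ℂ S).topologicalClosure := by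
        rw [hmin]; trivial
      rw [← SetLike.mem_coe, Submodule.topologicalClosure_coe] at hk0
      exact hk0
    have h1 : DVs k ∈ closure ((DVs : K → K) '' ((Submodule.span ℂ S : Submodule ℂ K) : Set K)) :=
      image_closure_subset_closure_image DVs.continuous ⟨k, hk, rfl⟩
    have h2 : (DVs : K → K) '' ((Submodule.span ℂ S : Submodule ℂ K) : Set K) ⊆ (W : Set K) := by
      rintro _ ⟨y, hy, rfl⟩
      rw [SetLike.mem_coe] at hy ⊢
      induction hy using Submodule.span_induction with
      | mem z hz =>
        obtain ⟨n, h', rfl⟩ := hz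
        cases n with
        | zero =>
          refine ⟨(h' : K), h'.2, ?_⟩
          simp
        | succ m =>
          rw [hkill m (h' : K)]
          exact W.zero_mem
      | zero => rw [map_zero]; exact W.zero_mem
      | add a b ha hb iha ihb => rw [map_add]; exact W.add_mem iha ihb
      | smul c a ha iha => rw [map_smul]; exact W.smul_mem c iha
    exact closure_mono h2 h1
  have hB : DenseRange B := by
    intro x
    have himg : (Subtype.val '' Set.range B) = (W : Set K) := by
      ext y
      constructor
      · rintro ⟨_, ⟨h, rfl⟩, rfl⟩; exact ⟨(h : K), h.2, rfl⟩
      · rintro ⟨z, hz, rfl⟩; exact ⟨B ⟨z, hz⟩, ⟨⟨z, hz⟩, rfl⟩, rfl⟩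
    rw [closure_subtype, himg]
    have hx : (x : K) ∈ closure (Set.range (DVs : K → K)) := by
      have hx2 : (x : K) ∈ (LinearMap.range (DVs : K →ₗ[ℂ] K)).topologicalClosure := x.2
      rw [← SetLike.mem_coe, Submodule.topologicalClosure_coe] at hx2
      simpa [LinearMap.coe_range] using hx2
    have := closure_mono hWsub hx
    rwa [closure_closure] at this
  refine exists_isometryEquiv_of_norm_eq A B hA hB ?_
  intro h
  have e1 : ‖B h‖ = ‖DVs (h : K)‖ := rfl
  have e2 : ‖A h‖ = ‖DPs h‖ := rfl
  rw [e1, e2]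
  exact hnormeq h
end

section
/- Let P be a contraction on H and V an isometry on K ⊇ H that is a minimal isometric dilation of P. Then for all h ∈ H, ‖(I - PP*)^{1/2} h‖ = ‖(I - VV*)^{1/2} h‖. -/
open ContinuousLinearMap

open scoped InnerProductSpace
theorem defect_norms_equal_on_H
    {K : Type*} [NormedAddCommGroup K] [InnerProductSpace ℂ K] [CompleteSpace K]
    (H : Submodule ℂ K) [CompleteSpace H]
    (P DPs : H →L[ℂ] H) (V DVs : K →L[ℂ] K)
    (hP : ‖P‖ ≤ 1)
    (hV : adjoint V ∘L V = 1)
    (hdil : ∀ (n : ℕ) (h : H), H.orthogonalProjectionOnto ((V ^ n) (h : K)) = (P ^ n) h)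
    (hmin : (Submodule.span ℂ {x : K | ∃ (n : ℕ) (h : H), x = (V ^ n) (h : K)}).topologicalClosure = ⊤)
    (hDPspos : DPs.IsPositive) (hDPs : DPs ∘L DPs = 1 - P ∘L adjoint P)
    (hDVspos : DVs.IsPositive) (hDVs : DVs ∘L DVs = 1 - V ∘L adjoint V) :
    ∀ h : H, ‖DPs h‖ = ‖DVs (h : K)‖ := by
  intro h
  -- V* extends P*
  have hext : adjoint V (h : K) = ((adjoint P h : H) : K) := by
    set x : K := adjoint V (h : K) - ((adjoint P h : H) : K) with hx
    have hbot : (Submodule.span ℂ {x : K | ∃ (n : ℕ) (h : H), x = (V ^ n) (h : K)})ᗮ = ⊥ :=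
      Submodule.topologicalClosure_eq_top_iff.mp hmin
    have hmem : x ∈ (Submodule.span ℂ {x : K | ∃ (n : ℕ) (h : H), x = (V ^ n) (h : K)})ᗮ := by
      rw [Submodule.mem_orthogonal]
      intro u hu
      induction hu using Submodule.span_induction with
      | mem u hu =>
        obtain ⟨n, h', rfl⟩ := hu
        have e1 : ⟪(V ^ n) (h' : K), adjoint V (h : K)⟫_ℂ = ⟪(V ^ (n+1)) (h' : K), (h : K)⟫_ℂ := by
          rw [adjoint_inner_right, pow_succ']
          rfl
        have e2 : ∀ m : ℕ, ⟪(V ^ m) (h' : K), (h : K)⟫_ℂ = ⟪((P ^ m) h' : H), h⟫_ℂ := by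
          intro m
          rw [← Submodule.inner_orthogonalProjectionOnto_eq_of_mem_right (K := H) h ((V ^ m) (h' : K)),
            hdil m h', Submodule.coe_inner]
        have e3 : ⟪((P ^ (n+1)) h' : H), h⟫_ℂ = ⟪((P ^ n) h' : H), adjoint P h⟫_ℂ := by
          rw [adjoint_inner_right, pow_succ']
          rfl
        have e4 : ⟪(V ^ n) (h' : K), ((adjoint P h : H) : K)⟫_ℂ
            = ⟪((P ^ n) h' : H), adjoint P h⟫_ℂ := by
          rw [← Submodule.inner_orthogonalProjectionOnto_eq_of_mem_right (K := H) (adjoint P h)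
            ((V ^ n) (h' : K)), hdil n h', Submodule.coe_inner]
        rw [hx, inner_sub_right, e1, e2, e4, e3, sub_self]
      | zero => simp
      | add u v _ _ hu hv => rw [inner_add_left, hu, hv, add_zero]
      | smul c u _ hu => rw [inner_smul_left, hu, mul_zero]
    rw [hbot, Submodule.mem_bot] at hmem
    exact sub_eq_zero.mp hmem
  -- compute squared norms via inner products
  have hPsq : ⟪DPs h, DPs h⟫_ℂ = ⟪h, h⟫_ℂ - ⟪adjoint P h, adjoint P h⟫_ℂ := by
    have hsa : ⟪DPs h, DPs h⟫_ℂ = ⟪h, (DPs ∘L DPs) h⟫_ℂ := by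
      rw [comp_apply, ← hDPspos.isSelfAdjoint.adjoint_eq, adjoint_inner_left, hDPspos.isSelfAdjoint.adjoint_eq]
    rw [hsa, hDPs]
    simp only [sub_apply, ContinuousLinearMap.one_apply, comp_apply, inner_sub_right]
    rw [adjoint_inner_left]
  have hVsq : ⟪DVs (h : K), DVs (h : K)⟫_ℂ
      = ⟪(h : K), (h : K)⟫_ℂ - ⟪adjoint V (h : K), adjoint V (h : K)⟫_ℂ := by
    have hsa : ⟪DVs (h : K), DVs (h : K)⟫_ℂ = ⟪(h : K), (DVs ∘L DVs) (h : K)⟫_ℂ := by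
      rw [comp_apply, ← hDVspos.isSelfAdjoint.adjoint_eq, adjoint_inner_left, hDVspos.isSelfAdjoint.adjoint_eq]
    rw [hsa, hDVs]
    simp only [sub_apply, ContinuousLinearMap.one_apply, comp_apply, inner_sub_right]
    rw [adjoint_inner_left]
  have hinner : ⟪DPs h, DPs h⟫_ℂ = ⟪DVs (h : K), DVs (h : K)⟫_ℂ := by
    rw [hPsq, hVsq, hext, ← Submodule.coe_inner, ← Submodule.coe_inner]
  have hr : ‖DPs h‖ ^ 2 = ‖DVs (h : K)‖ ^ 2 := by
    rw [← inner_self_eq_norm_sq (𝕜 := ℂ), ← inner_self_eq_norm_sq (𝕜 := ℂ), hinner]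
  have := sq_abs ‖DPs h‖ ▸ sq_abs ‖DVs (h : K)‖ ▸ hr
  calc ‖DPs h‖ = |‖DPs h‖| := (abs_of_nonneg (norm_nonneg _)).symm
    _ = |‖DVs (h : K)‖| := by
        exact abs_eq_abs.mpr (Or.inl (by
          nlinarith [norm_nonneg (DPs h), norm_nonneg (DVs (h : K)), hr]))
    _ = ‖DVs (h : K)‖ := abs_of_nonneg (norm_nonneg _)
end

section
/- Let S, P be commuting bounded operators on H, F a bounded operator on 𝒟_P with S - S*P = D_P F D_P, and F_* a bounded operator on 𝒟_{P*} with S* - S P* = D_{P*} F_* D_{P*}, where ‖P‖ ≤ 1. Then P F = F_** P on 𝒟_P (i.e., P F D_P h = F_** P D_P h for all h ∈ H, as vectors in 𝒟_{P*}). -/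
open ContinuousLinearMap Polynomial Filter Topology

section Aux

variable {H : Type*} [NormedAddCommGroup H] [InnerProductSpace ℂ H] [CompleteSpace H]

private lemma aux_pow_intertwine (x c d : H →L[ℂ] H) (h : x * c = d * x) (n : ℕ) :
    x * c ^ n = d ^ n * x := by
  induction n with
  | zero => simp
  | succ k ih =>
    calc x * c ^ (k + 1) = (x * c ^ k) * c := by rw [pow_succ, mul_assoc]
      _ = d ^ k * (x * c) := by rw [ih, mul_assoc]
      _ = d ^ k * (d * x) := by rw [h]
      _ = d ^ (k + 1) * x := by rw [pow_succ]; noncomm_ring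

private lemma aux_poly_intertwine (x c d : H →L[ℂ] H) (h : x * c = d * x) (p : ℝ[X]) :
    x * aeval c p = aeval d p * x := by
  induction p using Polynomial.induction_on with
  | C r => simp only [aeval_C]; exact (Algebra.commutes r x).symm ▸ (Algebra.commutes r x).symm
  | add p q hp hq => simp only [map_add, mul_add, add_mul, hp, hq]
  | monomial n r _ =>
    simp only [map_mul, aeval_C, map_pow, aeval_X, ← Algebra.smul_def]
    rw [mul_smul_comm, aux_pow_intertwine x c d h (n + 1), smul_mul_assoc]

private lemma aux_cfc_intertwine [Nontrivial H] (x c d : H →L[ℂ] H)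
    (hc : IsSelfAdjoint c) (hd : IsSelfAdjoint d) (h : x * c = d * x)
    (f : ℝ → ℝ) (hf : Continuous f) : x * cfc f c = cfc f d * x := by
  set M : ℝ := max ‖c‖ ‖d‖ with hM
  set I : Set ℝ := Set.Icc (-M) M with hI
  have hspec : ∀ e : H →L[ℂ] H, ‖e‖ ≤ M → ∀ t ∈ spectrum ℝ e, t ∈ I := by
    intro e he t ht
    have h1 : ‖t‖ ≤ ‖e‖ := spectrum.norm_le_norm_of_mem ht
    rw [Real.norm_eq_abs, abs_le] at h1
    exact ⟨by linarith, by linarith⟩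
  have hspecc := hspec c (le_max_left _ _)
  have hspecd := hspec d (le_max_right _ _)
  let fI : C(I, ℝ) := ⟨fun t => f t, hf.comp continuous_subtype_val⟩
  have hdense : fI ∈ closure ((polynomialFunctions I : Set C(I, ℝ))) := by
    have htop := polynomialFunctions.topologicalClosure I
    have : fI ∈ (polynomialFunctions I).topologicalClosure := by
      rw [htop]; trivial
    exact this
  obtain ⟨sq, hsqmem, hsqtend⟩ := mem_closure_iff_seq_limit.mp hdense
  have hex : ∀ n, ∃ q : ℝ[X], q.toContinuousMapOn I = sq n := by
    intro n
    have := hsqmem n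
    rw [polynomialFunctions_coe] at this
    obtain ⟨q, hq⟩ := this
    exact ⟨q, hq⟩
  choose p hp using hex
  have key : ∀ e : H →L[ℂ] H, IsSelfAdjoint e → (∀ t ∈ spectrum ℝ e, t ∈ I) →
      Tendsto (fun n => aeval e (p n)) atTop (𝓝 (cfc f e)) := by
    intro e he hsp
    rw [tendsto_iff_dist_tendsto_zero]
    have hb : ∀ n, dist (aeval e (p n)) (cfc f e) ≤ dist (sq n) fI := by
      intro n
      rw [dist_eq_norm, ← cfc_polynomial (p n) e he,
        ← cfc_sub (fun t => (p n).eval t) f e ((p n).continuous.continuousOn) hf.continuousOn]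
      refine norm_cfc_le dist_nonneg fun t ht => ?_
      have hmem := hsp t ht
      have heq : (p n).eval t - f t = (sq n) ⟨t, hmem⟩ - fI ⟨t, hmem⟩ := by
        have := congrArg (fun g : C(I, ℝ) => g ⟨t, hmem⟩) (hp n)
        simp only [Polynomial.toContinuousMapOn_apply, Polynomial.toContinuousMap_apply] at this
        simp [fI, ← this]
      rw [heq, ← dist_eq_norm]
      exact ContinuousMap.dist_apply_le_dist _
    have h0 : Tendsto (fun n => dist (sq n) fI) atTop (𝓝 0) :=
      tendsto_iff_dist_tendsto_zero.mp hsqtend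
    exact squeeze_zero (fun n => dist_nonneg) hb h0
  have hc' := key c hc hspecc
  have hd' := key d hd hspecd
  have h1 : Tendsto (fun n => x * aeval c (p n)) atTop (𝓝 (x * cfc f c)) := hc'.const_mul x
  have h2 : Tendsto (fun n => aeval d (p n) * x) atTop (𝓝 (cfc f d * x)) := hd'.mul_const x
  have h3 : (fun n => x * aeval c (p n)) = fun n => aeval d (p n) * x :=
    funext fun n => aux_poly_intertwine x c d h (p n)
  rw [h3] at h1
  exact tendsto_nhds_unique h1 h2

private lemma aux_cfc_sqrt_sq (a : H →L[ℂ] H) (ha : 0 ≤ a) : cfc Real.sqrt (a * a) = a := by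
  have hsa : IsSelfAdjoint a := IsSelfAdjoint.of_nonneg ha
  have h1 : a * a = cfc (fun t : ℝ => t ^ 2) a := by rw [cfc_pow_id a 2 hsa, sq]
  rw [h1, ← cfc_comp' Real.sqrt (fun t : ℝ => t ^ 2) a Real.continuous_sqrt.continuousOn
    ((continuous_pow 2).continuousOn) hsa]
  refine (cfc_congr fun t ht => ?_).trans (cfc_id ℝ a hsa)
  exact Real.sqrt_sq (spectrum_nonneg_of_nonneg ha ht)

end Aux

theorem fundamental_operators_intertwine_P
    {H : Type*} [NormedAddCommGroup H] [InnerProductSpace ℂ H] [CompleteSpace H]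
    (S P DP DPs F Fs : H →L[ℂ] H)
    (hcomm : S ∘L P = P ∘L S) (hP : ‖P‖ ≤ 1)
    (hDPpos : DP.IsPositive) (hDP : DP ∘L DP = 1 - adjoint P ∘L P)
    (hDPspos : DPs.IsPositive) (hDPs : DPs ∘L DPs = 1 - P ∘L adjoint P)
    -- F is an operator on the defect space 𝒟_P = closure Ran D_P, extended by zero
    (hFran : ∀ x : H, F x ∈ (LinearMap.range (DP : H →ₗ[ℂ] H)).topologicalClosure)
    (hFker : ∀ x ∈ ((LinearMap.range (DP : H →ₗ[ℂ] H)).topologicalClosure)ᗮ, F x = 0)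
    -- F_* is an operator on 𝒟_{P*}, extended by zero
    (hFsran : ∀ x : H, Fs x ∈ (LinearMap.range (DPs : H →ₗ[ℂ] H)).topologicalClosure)
    (hFsker : ∀ x ∈ ((LinearMap.range (DPs : H →ₗ[ℂ] H)).topologicalClosure)ᗮ, Fs x = 0)
    (hF : S - adjoint S ∘L P = DP ∘L F ∘L DP)
    (hFs : adjoint S - S ∘L adjoint P = DPs ∘L Fs ∘L DPs) :
    ∀ h : H, P (F (DP h)) = (adjoint Fs) (P (DP h)) := by
  rcases subsingleton_or_nontrivial H with hs | hn
  · intro h; exact Subsingleton.elim _ _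
  intro h
  simp only [← ContinuousLinearMap.mul_def] at hcomm hDP hDPs hF hFs
  have hDPsa : IsSelfAdjoint DP := hDPpos.isSelfAdjoint
  have hDPssa : IsSelfAdjoint DPs := hDPspos.isSelfAdjoint
  have hDPnn : 0 ≤ DP := (nonneg_iff_isPositive DP).2 hDPpos
  have hDPsnn : 0 ≤ DPs := (nonneg_iff_isPositive DPs).2 hDPspos
  -- P DP = DPs P
  have hPDsq : P * (DP * DP) = (DPs * DPs) * P := by
    rw [hDP, hDPs]; noncomm_ring
  have hDP2sa : IsSelfAdjoint (DP * DP) := by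
    rw [IsSelfAdjoint, star_mul, hDPsa.star_eq]
  have hDPs2sa : IsSelfAdjoint (DPs * DPs) := by
    rw [IsSelfAdjoint, star_mul, hDPssa.star_eq]
  have hPD : P * DP = DPs * P := by
    have := aux_cfc_intertwine P (DP * DP) (DPs * DPs) hDP2sa hDPs2sa hPDsq
      Real.sqrt Real.continuous_sqrt
    rwa [aux_cfc_sqrt_sq DP hDPnn, aux_cfc_sqrt_sq DPs hDPsnn] at this
  -- adjoint of the hFs relation
  have hFs' : S - P * star S = DPs * (star Fs * DPs) := by
    have h1 := congrArg star hFs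
    simp only [star_sub, star_mul, star_star, ← star_eq_adjoint, hDPssa.star_eq] at h1
    rw [h1, mul_assoc]
  have hF' : S - star S * P = DP * (F * DP) := by
    simpa only [← star_eq_adjoint, mul_assoc] using hF
  -- the key operator identity
  have hkey : DPs * (P * (F * DP)) = DPs * (star Fs * (P * DP)) := by
    calc DPs * (P * (F * DP)) = (DPs * P) * (F * DP) := by noncomm_ring
      _ = (P * DP) * (F * DP) := by rw [hPD]
      _ = P * (DP * (F * DP)) := by noncomm_ring
      _ = P * (S - star S * P) := by rw [← hF']
      _ = P * S - P * (star S * P) := by noncomm_ring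
      _ = S * P - P * (star S * P) := by rw [← hcomm]
      _ = (S - P * star S) * P := by noncomm_ring
      _ = (DPs * (star Fs * DPs)) * P := by rw [hFs']
      _ = DPs * (star Fs * (DPs * P)) := by noncomm_ring
      _ = DPs * (star Fs * (P * DP)) := by rw [hPD]
  have hkey' : DPs (P (F (DP h))) = DPs ((star Fs) (P (DP h))) := by
    have := congrFun (congrArg DFunLike.coe hkey) h
    simpa only [ContinuousLinearMap.mul_apply] using this
  set K := (LinearMap.range (DPs : H →ₗ[ℂ] H)).topologicalClosure with hKdef
  set u := P (F (DP h)) - (star Fs) (P (DP h)) with hudef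
  have hDPsu : DPs u = 0 := by
    rw [hudef, map_sub, hkey', sub_self]
  have hm1 : P (F (DP h)) ∈ K := by
    have hcl : IsClosed {y : H | P y ∈ K} :=
      (Submodule.isClosed_topologicalClosure _).preimage P.continuous
    have hsub : ((LinearMap.range (DP : H →ₗ[ℂ] H) : Submodule ℂ H) : Set H) ⊆
        {y : H | P y ∈ K} := by
      rintro _ ⟨x, rfl⟩
      have heq : P (DP x) = DPs (P x) := by
        have := congrFun (congrArg DFunLike.coe hPD) x
        simpa only [ContinuousLinearMap.mul_apply] using this
      simp only [Set.mem_setOf_eq, ContinuousLinearMap.coe_coe, heq]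
      exact Submodule.le_topologicalClosure _ ⟨P x, rfl⟩
    have hF1 : F (DP h) ∈ closure ((LinearMap.range (DP : H →ₗ[ℂ] H) : Submodule ℂ H) : Set H) := by
      have := hFran (DP h)
      rwa [← Submodule.topologicalClosure_coe, SetLike.mem_coe]
    exact closure_minimal hsub hcl hF1
  have hm2 : (star Fs) (P (DP h)) ∈ K := by
    have horth : (star Fs) (P (DP h)) ∈ Kᗮᗮ := by
      rw [Submodule.mem_orthogonal']
      intro v hv
      rw [star_eq_adjoint, adjoint_inner_left, hFsker v hv, inner_zero_right]
    rwa [Submodule.orthogonal_orthogonal_eq_closure,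
      IsClosed.submodule_topologicalClosure_eq (Submodule.isClosed_topologicalClosure _)] at horth
  have hum : u ∈ K := K.sub_mem hm1 hm2
  have huo : u ∈ Kᗮ := by
    rw [Submodule.mem_orthogonal']
    intro v hv
    have hsub : ((LinearMap.range (DPs : H →ₗ[ℂ] H) : Submodule ℂ H) : Set H) ⊆
        {w : H | (inner ℂ u w : ℂ) = 0} := by
      rintro _ ⟨x, rfl⟩
      simp only [Set.mem_setOf_eq, LinearMap.coe_coe]
      calc (inner ℂ u (DPs x) : ℂ) = inner ℂ ((adjoint DPs) u) x := (adjoint_inner_left DPs x u).symm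
        _ = inner ℂ (DPs u) x := by rw [hDPssa.adjoint_eq]
        _ = 0 := by rw [hDPsu, inner_zero_left]
    have hcl : IsClosed {w : H | (inner ℂ u w : ℂ) = 0} :=
      isClosed_eq (continuous_const.inner continuous_id) continuous_const
    have hv' : v ∈ closure ((LinearMap.range (DPs : H →ₗ[ℂ] H) : Submodule ℂ H) : Set H) := by
      rwa [← Submodule.topologicalClosure_coe, SetLike.mem_coe]
    exact closure_minimal hsub hcl hv'
  have hu0 : u = 0 := by
    have : (inner ℂ u u : ℂ) = 0 := (Submodule.mem_orthogonal' K u).mp huo u hum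
    exact inner_self_eq_zero.mp this
  have := sub_eq_zero.mp (hudef ▸ hu0)
  simpa only [← star_eq_adjoint] using this
end

section
/- With the hypotheses above (F and F_* the fundamental operators of (S,P) and (S*,P*)), the intertwining relation D_P S = F D_P + F* D_P P holds as operators from H to 𝒟_P. -/
open ContinuousLinearMap
open scoped InnerProductSpace

theorem DP_S_eq_F_DP_add_Fstar_DP_P
    {H : Type*} [NormedAddCommGroup H] [InnerProductSpace ℂ H] [CompleteSpace H]
    (S P DP DPs F Fs : H →L[ℂ] H)
    (hcomm : S ∘L P = P ∘L S) (hP : ‖P‖ ≤ 1)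
    (hDPpos : DP.IsPositive) (hDP : DP ∘L DP = 1 - adjoint P ∘L P)
    (hDPspos : DPs.IsPositive) (hDPs : DPs ∘L DPs = 1 - P ∘L adjoint P)
    (hFran : ∀ x : H, F x ∈ (LinearMap.range (DP : H →ₗ[ℂ] H)).topologicalClosure)
    (hFker : ∀ x ∈ ((LinearMap.range (DP : H →ₗ[ℂ] H)).topologicalClosure)ᗮ, F x = 0)
    (hFsran : ∀ x : H, Fs x ∈ (LinearMap.range (DPs : H →ₗ[ℂ] H)).topologicalClosure)
    (hFsker : ∀ x ∈ ((LinearMap.range (DPs : H →ₗ[ℂ] H)).topologicalClosure)ᗮ, Fs x = 0)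
    (hF : S - adjoint S ∘L P = DP ∘L F ∘L DP)
    (hFs : adjoint S - S ∘L adjoint P = DPs ∘L Fs ∘L DPs) :
    ∀ h : H, DP (S h) = F (DP h) + (adjoint F) (DP (P h)) := by
  intro x
  set R : Submodule ℂ H := LinearMap.range (DP : H →ₗ[ℂ] H) with hR
  set M : Submodule ℂ H := R.topologicalClosure with hMdef
  have hDPsa : adjoint DP = DP := hDPpos.isSelfAdjoint
  have hsa : ∀ a b : H, ⟪DP a, b⟫_ℂ = ⟪a, DP b⟫_ℂ := by
    intro a b
    nth_rewrite 1 [← hDPsa]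
    exact adjoint_inner_left DP b a
  have hFx : ∀ z : H, DP (F (DP z)) = S z - adjoint S (P z) := by
    intro z
    have := congrArg (fun (T : H →L[ℂ] H) => T z) hF
    simpa using this.symm
  have hDP2 : ∀ z : H, DP (DP z) = z - adjoint P (P z) := by
    intro z
    have := congrArg (fun (T : H →L[ℂ] H) => T z) hDP
    simpa using this
  have hcx : ∀ z : H, S (P z) = P (S z) := by
    intro z
    have := congrArg (fun (T : H →L[ℂ] H) => T z) hcomm
    simpa using this
  set v : H := DP (S x) - (F (DP x) + adjoint F (DP (P x))) with hv
  have key : ∀ y : H, ⟪DP y, v⟫_ℂ = 0 := by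
    intro y
    have h1 : ⟪DP y, DP (S x)⟫_ℂ = ⟪y, S x⟫_ℂ - ⟪P y, P (S x)⟫_ℂ := by
      rw [hsa, hDP2, inner_sub_right, adjoint_inner_right]
    have h2 : ⟪DP y, F (DP x)⟫_ℂ = ⟪y, S x⟫_ℂ - ⟪S y, P x⟫_ℂ := by
      rw [hsa, hFx, inner_sub_right, adjoint_inner_right]
    have h3 : ⟪DP y, adjoint F (DP (P x))⟫_ℂ = ⟪S y, P x⟫_ℂ - ⟪P y, P (S x)⟫_ℂ := by
      rw [adjoint_inner_right, ← hsa, hFx, inner_sub_left, adjoint_inner_left, hcx]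
    rw [hv, inner_sub_right, inner_add_right, h1, h2, h3]
    ring
  have hvR : v ∈ Rᗮ := by
    rw [Submodule.mem_orthogonal]
    rintro u ⟨y, rfl⟩
    exact key y
  haveI : CompleteSpace M := (R.isClosed_topologicalClosure).completeSpace_coe
  have hvM : v ∈ M := by
    refine Submodule.sub_mem _ ?_ (Submodule.add_mem _ (hFran _) ?_)
    · exact Submodule.le_topologicalClosure R ⟨S x, rfl⟩
    · have hmem : adjoint F (DP (P x)) ∈ Mᗮᗮ := by
        rw [Submodule.mem_orthogonal]
        intro w hw
        rw [adjoint_inner_right, hFker w hw, inner_zero_left]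
      rwa [Submodule.orthogonal_orthogonal] at hmem
  have hvRoo : v ∈ Rᗮᗮ := by
    rw [Submodule.orthogonal_orthogonal_eq_closure]
    exact hvM
  have h0 : ⟪v, v⟫_ℂ = 0 := (Submodule.mem_orthogonal _ _).mp hvRoo v hvR
  have hv0 : v = 0 := inner_self_eq_zero.mp h0
  exact sub_eq_zero.mp hv0
end

section
/- With F and F_* the fundamental operators of (S,P) and (S*,P*) respectively, the relation D_{P*} F_* = S* D_{P*} - D_P F P* holds as operators from 𝒟_{P*} to H. -/
open ContinuousLinearMap
open Polynomial

lemma commute_cfcHom {A : Type*} [CStarAlgebra A] {a b : A} (ha : IsSelfAdjoint a)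
    (hb : Commute b a) (f : C(spectrum ℝ a, ℝ)) : Commute b (cfcHom ha f) := by
  let K : Subalgebra ℝ C(spectrum ℝ a, ℝ) :=
    (Subalgebra.centralizer ℝ {b}).comap (cfcHom ha (R := ℝ)).toAlgHom
  have hKclosed : IsClosed (K : Set C(spectrum ℝ a, ℝ)) := by
    have h1 : Continuous (cfcHom ha (R := ℝ)) := (cfcHom_isClosedEmbedding ha).continuous
    have : (K : Set C(spectrum ℝ a, ℝ)) =
        (fun g => b * cfcHom ha g - cfcHom ha g * b) ⁻¹' {0} := by
      ext g
      simp only [K, SetLike.mem_coe, Subalgebra.mem_comap, Subalgebra.mem_centralizer_iff,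
        Set.mem_singleton_iff, forall_eq, Set.mem_preimage, Set.mem_singleton_iff, sub_eq_zero,
        AlgHom.coe_coe, StarAlgHom.coe_toAlgHom]
    rw [this]
    exact IsClosed.preimage ((continuous_const.mul h1).sub (h1.mul continuous_const))
      isClosed_singleton
  have hXmem : (toContinuousMapOnAlgHom (spectrum ℝ a) X) ∈ K := by
    have hX : cfcHom ha (toContinuousMapOnAlgHom (spectrum ℝ a) X) = a := by
      have : (toContinuousMapOnAlgHom (spectrum ℝ a) X) =
          (ContinuousMap.id ℝ).restrict (spectrum ℝ a) := by
        ext x; simp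
      rw [this, cfcHom_id]
    simp only [K, Subalgebra.mem_comap, Subalgebra.mem_centralizer_iff,
      Set.mem_singleton_iff, forall_eq, AlgHom.coe_coe, StarAlgHom.coe_toAlgHom,
      toContinuousMapOnAlgHom_apply] at *
    rw [hX]
    exact hb.eq
  have hle : polynomialFunctions (spectrum ℝ a) ≤ K := by
    rw [polynomialFunctions.eq_adjoin_X]
    exact Algebra.adjoin_le (by simpa using hXmem)
  have hmem : f ∈ K := by
    have h2 := polynomialFunctions.topologicalClosure (spectrum ℝ a)
    have h3 := Subalgebra.topologicalClosure_minimal hle hKclosed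
    rw [h2] at h3
    exact h3 (Algebra.mem_top)
  have h4 := (Subalgebra.mem_comap _ _ _).mp hmem
  rw [Subalgebra.mem_centralizer_iff] at h4
  exact (h4 b rfl)

lemma commute_cfc {A : Type*} [CStarAlgebra A] {a b : A} (hb : Commute b a) (f : ℝ → ℝ) :
    Commute b (cfc f a) := by
  refine cfc_cases (fun x => Commute b x) a f (Commute.zero_right b) fun hf ha => ?_
  exact commute_cfcHom ha hb _

lemma cfc_sqrt_mul_self {A : Type*} [CStarAlgebra A] [PartialOrder A] [StarOrderedRing A]
    {d : A} (hd : 0 ≤ d) : cfc Real.sqrt (d * d) = d := by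
  have hsa : IsSelfAdjoint d := IsSelfAdjoint.of_nonneg hd
  have h1 : d * d = cfc (fun x : ℝ => x ^ 2) d := by
    rw [cfc_pow_id d 2, sq]
  rw [h1, ← cfc_comp' Real.sqrt (fun x : ℝ => x ^ 2) d Real.continuous_sqrt.continuousOn]
  refine cfc_congr (fun x hx => ?_) |>.trans (cfc_id ℝ d)
  have : (0 : ℝ) ≤ x := spectrum_nonneg_of_nonneg hd hx
  simp [Real.sqrt_sq this]

lemma intertwine_of_intertwine_sq {H : Type*} [NormedAddCommGroup H] [InnerProductSpace ℂ H]
    [CompleteSpace H] (T a b : H →L[ℂ] H) (ha : a.IsPositive) (hb : b.IsPositive)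
    (h : T ∘L (a ∘L a) = (b ∘L b) ∘L T) : T ∘L a = b ∘L T := by
  let E := WithLp 2 (H × H)
  let e : E ≃L[ℂ] H × H := WithLp.prodContinuousLinearEquiv 2 ℂ H H
  let lift : ((H × H) →L[ℂ] (H × H)) → (E →L[ℂ] E) := fun M =>
    (e.symm : (H × H) →L[ℂ] E) ∘L M ∘L (e : E →L[ℂ] (H × H))
  have lift_apply : ∀ (M : (H × H) →L[ℂ] (H × H)) (z : E), lift M z = e.symm (M (e z)) :=
    fun M z => rfl
  have lift_mul : ∀ (M N : (H × H) →L[ℂ] (H × H)), lift M ∘L lift N = lift (M ∘L N) := by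
    intro M N; ext z <;> rfl
  let D : E →L[ℂ] E := lift (b.prodMap a)
  let X : E →L[ℂ] E := lift ((T.comp (ContinuousLinearMap.snd ℂ H H)).prod 0)
  have hDpos : D.IsPositive := by
    rw [isPositive_iff_complex]
    intro z
    have hz : (inner ℂ (D z) z : ℂ) = inner ℂ (b z.fst) z.fst + inner ℂ (a z.snd) z.snd := rfl
    have h1 := (isPositive_iff_complex b).mp hb z.fst
    have h2 := (isPositive_iff_complex a).mp ha z.snd
    constructor
    · rw [hz, map_add, Complex.ofReal_add, h1.1, h2.1]
    · rw [hz, map_add]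
      exact add_nonneg h1.2 h2.2
  have hD0 : 0 ≤ D := (nonneg_iff_isPositive D).mpr hDpos
  have hDD : D * D = lift ((b ∘L b).prodMap (a ∘L a)) := by
    rw [mul_def, lift_mul]
    congr 1
  have hXC : ((T.comp (ContinuousLinearMap.snd ℂ H H)).prod 0) ∘L ((b ∘L b).prodMap (a ∘L a))
      = ((b ∘L b).prodMap (a ∘L a)) ∘L ((T.comp (ContinuousLinearMap.snd ℂ H H)).prod 0) := by
    ext z
    all_goals simp
    simpa using ContinuousLinearMap.ext_iff.mp h z
  have hCom : Commute X (D * D) := by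
    rw [hDD, Commute, SemiconjBy, mul_def, mul_def, lift_mul, lift_mul, hXC]
  have key : Commute X D := by
    have := commute_cfc hCom Real.sqrt
    rwa [cfc_sqrt_mul_self hD0] at this
  ext y
  have := congrFun (congrArg (fun (M : E →L[ℂ] E) => (M : E → E)) key.eq)
    (e.symm ((0 : H), y))
  exact congrArg WithLp.fst this

theorem DPs_Fs_eq_Sstar_DPs_sub_DP_F_Pstar
    {H : Type*} [NormedAddCommGroup H] [InnerProductSpace ℂ H] [CompleteSpace H]
    (S P DP DPs F Fs : H →L[ℂ] H)
    (hcomm : S ∘L P = P ∘L S) (hP : ‖P‖ ≤ 1)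
    (hDPpos : DP.IsPositive) (hDP : DP ∘L DP = 1 - adjoint P ∘L P)
    (hDPspos : DPs.IsPositive) (hDPs : DPs ∘L DPs = 1 - P ∘L adjoint P)
    (hFran : ∀ x : H, F x ∈ (LinearMap.range (DP : H →ₗ[ℂ] H)).topologicalClosure)
    (hFker : ∀ x ∈ ((LinearMap.range (DP : H →ₗ[ℂ] H)).topologicalClosure)ᗮ, F x = 0)
    (hFsran : ∀ x : H, Fs x ∈ (LinearMap.range (DPs : H →ₗ[ℂ] H)).topologicalClosure)
    (hFsker : ∀ x ∈ ((LinearMap.range (DPs : H →ₗ[ℂ] H)).topologicalClosure)ᗮ, Fs x = 0)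
    (hF : S - adjoint S ∘L P = DP ∘L F ∘L DP)
    (hFs : adjoint S - S ∘L adjoint P = DPs ∘L Fs ∘L DPs) :
    ∀ x ∈ (LinearMap.range (DPs : H →ₗ[ℂ] H)).topologicalClosure,
      DPs (Fs x) = adjoint S (DPs x) - DP (F (adjoint P x)) := by
  have hint : adjoint P ∘L DPs = DP ∘L adjoint P := by
    apply intertwine_of_intertwine_sq _ _ _ hDPspos hDPpos
    rw [hDPs, hDP]
    ext y
    simp [map_sub]
  have hset : ∀ y : H,
      DPs (Fs (DPs y)) = adjoint S (DPs (DPs y)) - DP (F (adjoint P (DPs y))) := by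
    intro y
    have h1 : DPs (Fs (DPs y)) = adjoint S y - S (adjoint P y) := by
      have := ContinuousLinearMap.ext_iff.mp hFs y
      simpa using this.symm
    have h2 : adjoint P (DPs y) = DP (adjoint P y) := by
      have := ContinuousLinearMap.ext_iff.mp hint y
      simpa using this
    have h3 : DPs (DPs y) = y - P (adjoint P y) := by
      have := ContinuousLinearMap.ext_iff.mp hDPs y
      simpa using this
    have h4 : DP (F (DP (adjoint P y)))
        = S (adjoint P y) - adjoint S (P (adjoint P y)) := by
      have := ContinuousLinearMap.ext_iff.mp hF (adjoint P y)
      simpa using this.symm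
    rw [h1, h2, h3, h4, map_sub]
    abel
  intro x hx
  have hclosed : IsClosed {x : H | DPs (Fs x) = adjoint S (DPs x) - DP (F (adjoint P x))} := by
    apply isClosed_eq
    · exact DPs.continuous.comp Fs.continuous
    · exact ((adjoint S).continuous.comp DPs.continuous).sub
        (DP.continuous.comp (F.continuous.comp (adjoint P).continuous))
  have hsub : (LinearMap.range (DPs : H →ₗ[ℂ] H) : Set H) ⊆
      {x : H | DPs (Fs x) = adjoint S (DPs x) - DP (F (adjoint P x))} := by
    rintro _ ⟨y, rfl⟩
    exact hset y
  have hx' : x ∈ closure (LinearMap.range (DPs : H →ₗ[ℂ] H) : Set H) := by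
    rwa [← Submodule.topologicalClosure_coe]
  exact closure_minimal hsub hclosed hx'
end

section
/- With F, F_* as above, the relation F P* - P* F_** = F* D_P D_{P*} - D_P D_{P*} F_* holds, after pre- and post-multiplication by defect operators: D_P (F P* - P* F_**) D_{P*} = D_P F* D_P D_{P*}² - D_P² D_{P*} F_* D_{P*}. -/
open ContinuousLinearMap

set_option synthInstance.maxHeartbeats 1000000
set_option maxHeartbeats 1000000

section CommuteCFC

variable {A : Type*} [CStarAlgebra A]

lemma commute_of_mem_elemental {a x y : A} (h : Commute x a)
    (hy : y ∈ StarAlgebra.elemental ℂ a) (hstar : Commute x (star a)) : Commute x y := by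
  have hadj : ∀ z ∈ StarAlgebra.adjoin ℂ ({a} : Set A), Commute x z ∧ Commute x (star z) := by
    intro z hz
    induction hz using StarAlgebra.adjoin_induction with
    | mem w hw =>
      rw [Set.mem_singleton_iff] at hw
      subst hw
      exact ⟨h, hstar⟩
    | algebraMap r =>
      refine ⟨Algebra.commute_algebraMap_right r x, ?_⟩
      rw [← algebraMap_star_comm]
      exact Algebra.commute_algebraMap_right _ x
    | add _ _ _ _ h1 h2 =>
      exact ⟨h1.1.add_right h2.1, by rw [star_add]; exact h1.2.add_right h2.2⟩
    | mul _ _ _ _ h1 h2 =>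
      exact ⟨h1.1.mul_right h2.1, by rw [star_mul]; exact h2.2.mul_right h1.2⟩
    | star _ _ h1 => exact ⟨h1.2, by rw [star_star]; exact h1.1⟩
  have hclosed : IsClosed {z : A | x * z = z * x} :=
    isClosed_eq (continuous_mul_left x) (continuous_mul_right x)
  have hy' : y ∈ closure ((StarAlgebra.adjoin ℂ ({a} : Set A) : StarSubalgebra ℂ A) : Set A) := hy
  exact closure_minimal (fun z hz => (hadj z hz).1) hclosed hy'

lemma commute_cfc_complex {a x : A} (h : Commute x a) (hstar : Commute x (star a)) (f : ℂ → ℂ) :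
    Commute x (cfc f a) := by
  refine cfc_cases (fun y => Commute x y) a f (Commute.zero_right x) fun hf ha => ?_
  rw [cfcHom_eq_of_isStarNormal a (ha := ha)]
  exact commute_of_mem_elemental h (SetLike.coe_mem _) hstar

end CommuteCFC

section Hilbert

variable {H : Type*} [NormedAddCommGroup H] [InnerProductSpace ℂ H] [CompleteSpace H]

lemma commute_cfc_sqrt {a x : H →L[ℂ] H} (h : Commute x a) (ha : 0 ≤ a) :
    Commute x (CFC.sqrt a) := by
  have hsa : IsSelfAdjoint a := .of_nonneg ha
  rw [CFC.sqrt_eq_cfc, cfc_nnreal_eq_real NNReal.sqrt a ha, cfc_real_eq_complex _ hsa]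
  exact commute_cfc_complex h (hsa.star_eq.symm ▸ h) _

lemma commute_of_commute_sq {t x : H →L[ℂ] H} (ht : t.IsPositive)
    (h : Commute x (t ∘L t)) : Commute x t := by
  have ht0 : (0 : H →L[ℂ] H) ≤ t := (nonneg_iff_isPositive t).mpr ht
  have hsq : CFC.sqrt (t ∘L t) = t := CFC.sqrt_unique (by rw [mul_def]) ht0
  have htt : (0 : H →L[ℂ] H) ≤ t ∘L t := by
    simpa [mul_def, ht.isSelfAdjoint.star_eq] using star_mul_self_nonneg t
  exact hsq ▸ commute_cfc_sqrt h htt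

lemma intertwine_sqrt (P DP DPs : H →L[ℂ] H)
    (hDPpos : DP.IsPositive) (hDP : DP ∘L DP = 1 - adjoint P ∘L P)
    (hDPspos : DPs.IsPositive) (hDPs : DPs ∘L DPs = 1 - P ∘L adjoint P) :
    P ∘L DP = DPs ∘L P := by
  let e : WithLp 2 (H × H) ≃L[ℂ] H × H := WithLp.prodContinuousLinearEquiv 2 ℂ H H
  let Φ : (H × H →L[ℂ] H × H) → (WithLp 2 (H × H) →L[ℂ] WithLp 2 (H × H)) := fun g =>
    (e.symm : (H × H) →L[ℂ] WithLp 2 (H × H)) ∘L g ∘L (e : WithLp 2 (H × H) →L[ℂ] H × H)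
  have hΦmul : ∀ g₁ g₂, Φ g₁ ∘L Φ g₂ = Φ (g₁ ∘L g₂) := by
    intro g₁ g₂; ext z <;> simp [Φ]
  let T := Φ (DP.prodMap DPs)
  let A0 : H × H →L[ℂ] H × H := (1 - adjoint P ∘L P).prodMap (1 - P ∘L adjoint P)
  let X := Φ ((0 : H × H →L[ℂ] H).prod (P ∘L fst ℂ H H))
  have hTsq : T ∘L T = Φ A0 := by
    rw [hΦmul]
    unfold A0
    rw [← hDP, ← hDPs]
    congr 1
  have hDP' := (isPositive_iff_complex DP).mp hDPpos
  have hDPs' := (isPositive_iff_complex DPs).mp hDPspos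
  have hTpos : T.IsPositive := by
    rw [isPositive_iff_complex]
    intro z
    have hinner : (inner ℂ (T z) z : ℂ)
        = inner ℂ (DP (WithLp.equiv 2 (H × H) z).1) (WithLp.equiv 2 (H × H) z).1
          + inner ℂ (DPs (WithLp.equiv 2 (H × H) z).2) (WithLp.equiv 2 (H × H) z).2 :=
      WithLp.prod_inner_apply _ _
    rw [hinner]
    obtain ⟨h1, h1'⟩ := hDP' (WithLp.equiv 2 (H × H) z).1
    obtain ⟨h2, h2'⟩ := hDPs' (WithLp.equiv 2 (H × H) z).2
    constructor
    · rw [map_add]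
      push_cast
      rw [h1, h2]
    · rw [map_add]
      exact add_nonneg h1' h2'
  have hXA : Commute X (Φ A0) := by
    show X * Φ A0 = Φ A0 * X
    rw [mul_def, mul_def, hΦmul, hΦmul]
    congr 1
    refine ContinuousLinearMap.ext fun z => Prod.ext ?_ ?_ <;> simp [A0]
  have hXT : Commute X T := by
    rw [← hTsq] at hXA
    exact commute_of_commute_sq hTpos hXA
  have happ : ∀ u : H, P (DP u) = DPs (P u) := by
    intro u
    have h1 : (X ∘L T) ((WithLp.equiv 2 (H × H)).symm (u, 0))
        = (T ∘L X) ((WithLp.equiv 2 (H × H)).symm (u, 0)) := by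
      rw [← mul_def, ← mul_def, hXT]
    have h2 := congrArg (fun z : WithLp 2 (H × H) => (WithLp.equiv 2 (H × H) z).2) h1
    simpa [X, T, Φ, e] using h2
  ext u
  exact happ u

end Hilbert

theorem sandwiched_fundamental_identity
    {H : Type*} [NormedAddCommGroup H] [InnerProductSpace ℂ H] [CompleteSpace H]
    (S P DP DPs F Fs : H →L[ℂ] H)
    (hcomm : S ∘L P = P ∘L S) (hP : ‖P‖ ≤ 1)
    (hDPpos : DP.IsPositive) (hDP : DP ∘L DP = 1 - adjoint P ∘L P)
    (hDPspos : DPs.IsPositive) (hDPs : DPs ∘L DPs = 1 - P ∘L adjoint P)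
    (hF : S - adjoint S ∘L P = DP ∘L F ∘L DP)
    (hFs : adjoint S - S ∘L adjoint P = DPs ∘L Fs ∘L DPs) :
    DP ∘L (F ∘L adjoint P - adjoint P ∘L adjoint Fs) ∘L DPs =
      (DP ∘L adjoint F ∘L DP) ∘L (DPs ∘L DPs)
        - (DP ∘L DP) ∘L (DPs ∘L Fs ∘L DPs) := by
  have hDPsa : star DP = DP := hDPpos.isSelfAdjoint.star_eq
  have hDPssa : star DPs = DPs := hDPspos.isSelfAdjoint.star_eq
  have f1 : P * DP = DPs * P := by
    simp only [mul_def]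
    exact intertwine_sqrt P DP DPs hDPpos hDP hDPspos hDPs
  have f2 : star P * DPs = DP * star P := by
    have := congrArg star f1
    simp only [star_mul, hDPsa, hDPssa] at this
    exact this.symm
  simp only [← star_eq_adjoint, ← mul_def] at hF hFs hDP hDPs hcomm ⊢
  -- abbreviations as pure ring identities
  have hF' : DP * (F * DP) = S - star S * P := hF.symm
  have hFs' : DPs * (Fs * DPs) = star S - S * star P := hFs.symm
  have e5 : DP * (star F * DP) = star S - star P * S := by
    have h := congrArg star hF'
    simp only [star_sub, star_mul, hDPsa, star_star] at h
    calc DP * (star F * DP) = DP * star F * DP := by noncomm_ring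
      _ = star S - star P * S := by rw [← h]
  have e6 : DPs * (star Fs * DPs) = S - P * star S := by
    have h := congrArg star hFs'
    simp only [star_sub, star_mul, hDPssa, star_star] at h
    calc DPs * (star Fs * DPs) = DPs * star Fs * DPs := by noncomm_ring
      _ = S - P * star S := by rw [← h]
  have step1 : DP * (F * star P) * DPs = (DP * (F * DP)) * star P := by
    have h : DP * (F * star P) * DPs = (DP * F) * (star P * DPs) := by noncomm_ring
    rw [h, f2]; noncomm_ring
  have step2 : DP * (star P * star Fs) * DPs = star P * (DPs * (star Fs * DPs)) := by
    have h : DP * (star P * star Fs) * DPs = (DP * star P) * (star Fs * DPs) := by noncomm_ring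
    rw [h, ← f2]; noncomm_ring
  have main : DP * (F * star P) * DPs - DP * (star P * star Fs) * DPs
      = (DP * (star F * DP)) * (DPs * DPs) - (DP * DP) * (DPs * (Fs * DPs)) := by
    rw [step1, step2, hF', e6, e5, hFs', hDP, hDPs]
    have hc : S * P = P * S := hcomm
    have diff : ((S - star S * P) * star P - star P * (S - P * star S))
        - ((star S - star P * S) * (1 - P * star P) - (1 - star P * P) * (star S - S * star P))
        = star P * (P * S - S * P) * star P := by noncomm_ring
    have hc' : P * S - S * P = 0 := by rw [hc, sub_self]
    rw [hc', mul_zero, zero_mul] at diff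
    exact sub_eq_zero.mp diff
  calc DP * ((F * star P - star P * star Fs) * DPs)
      = DP * (F * star P) * DPs - DP * (star P * star Fs) * DPs := by noncomm_ring
    _ = (DP * (star F * DP)) * (DPs * DPs) - (DP * DP) * (DPs * (Fs * DPs)) := main
    _ = DP * (star F * DP) * (DPs * DPs) - DP * DP * (DPs * (Fs * DPs)) := by noncomm_ring
end
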